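/- arXiv:2001.02460 — 5 statements merged into one kernel-verified Lean document; each statement's English description precedes it below -/
import Mathlib

section
/- Let p_t(x) = (2πt)^{-1/2} exp(−x²/(2t)) be the heat kernel. For every t > 0 and every h ∈ ℝ, ∫₀ᵗ ∫_ℝ (p_s(v+h) − p_s(v))² dv ds = (2/π) ∫₀^∞ (1 − e^{−t ξ²}) (1 − cos(|h| ξ))/ξ² dξ. -/
/-- The standard heat kernel `p_t(x) = (2πt)^{-1/2} exp(-x²/(2t))`. -/
noncomputable def heatKernel (t x : ℝ) : ℝ :=
  (1 / Real.sqrt (2 * Real.pi * t)) * Real.exp (-x ^ 2 / (2 * t))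

open Real MeasureTheory Set Complex

lemma gauss_cos (s a : ℝ) (hs : 0 < s) :
    ∫ x : ℝ, Real.exp (-s * x ^ 2) * Real.cos (a * x)
      = Real.sqrt (Real.pi / s) * Real.exp (-a ^ 2 / (4 * s)) := by
  have hb : (0:ℝ) < (s : ℂ).re := by simpa using hs
  have key := fourierIntegral_gaussian (b := (s:ℂ)) hb (a : ℂ)
  have hint : Integrable fun x : ℝ => Complex.exp (Complex.I * a * x) * Complex.exp (-s * x ^ 2) := by
    have := integrable_cexp_quadratic (b := (s:ℂ)) hb (Complex.I * a) 0
    refine this.congr (Filter.Eventually.of_forall fun x => ?_)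
    simp only [← Complex.exp_add]; ring_nf
  have hre : ∀ x : ℝ, (Complex.exp (Complex.I * a * x) * Complex.exp (-s * x ^ 2)).re
      = Real.exp (-s * x ^ 2) * Real.cos (a * x) := by
    intro x
    rw [show (Complex.I * a * x) = ((a * x : ℝ) : ℂ) * Complex.I by push_cast; ring,
      show ((-s * x ^ 2 : ℂ) : ℂ) = ((-s * x ^ 2 : ℝ) : ℂ) by push_cast; ring,
      ← Complex.ofReal_exp, mul_comm, Complex.re_ofReal_mul, Complex.exp_ofReal_mul_I_re]
  calc ∫ x : ℝ, Real.exp (-s * x ^ 2) * Real.cos (a * x)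
      = ∫ x : ℝ, (Complex.exp (Complex.I * a * x) * Complex.exp (-s * x ^ 2)).re := by
        simp_rw [hre]
    _ = (∫ x : ℝ, Complex.exp (Complex.I * a * x) * Complex.exp (-s * x ^ 2)).re :=
        by simp_rw [← RCLike.re_eq_complex_re]; exact integral_re hint
    _ = (((Real.pi / s : ℝ) : ℂ) ^ (1 / 2 : ℂ) * Complex.exp (-a ^ 2 / (4 * s))).re := by
        rw [key]; push_cast; ring_nf
    _ = Real.sqrt (Real.pi / s) * Real.exp (-a ^ 2 / (4 * s)) := by
        rw [show (1/2 : ℂ) = ((1/2 : ℝ) : ℂ) by norm_num,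
          ← Complex.ofReal_cpow (by positivity), Real.sqrt_eq_rpow]
        rw [show (-(a:ℂ) ^ 2 / (4 * (s:ℂ))) = ((-a ^ 2 / (4 * s) : ℝ) : ℂ) by push_cast; ring,
          ← Complex.ofReal_exp, ← Complex.ofReal_mul, Complex.ofReal_re]

lemma gauss_cos_integrable (s a : ℝ) (hs : 0 < s) :
    Integrable fun x : ℝ => Real.exp (-s * x ^ 2) * Real.cos (a * x) := by
  refine (integrable_exp_neg_mul_sq hs).mono ?_ (Filter.Eventually.of_forall fun x => ?_)
  · exact Continuous.aestronglyMeasurable (by continuity)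
  · rw [Real.norm_eq_abs, Real.norm_eq_abs, abs_mul, abs_of_pos (Real.exp_pos _)]
    nlinarith [abs_cos_le_one (a * x), Real.exp_pos (-s * x ^ 2), abs_nonneg (Real.cos (a*x))]

lemma gauss_cos_Ioi (s a : ℝ) (hs : 0 < s) :
    ∫ x in Set.Ioi (0:ℝ), Real.exp (-s * x ^ 2) * Real.cos (a * x)
      = Real.sqrt (Real.pi / s) * Real.exp (-a ^ 2 / (4 * s)) / 2 := by
  have hint := gauss_cos_integrable s a hs
  have heven : ∀ x : ℝ, Real.exp (-s * (-x) ^ 2) * Real.cos (a * (-x))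
      = Real.exp (-s * x ^ 2) * Real.cos (a * x) := by
    intro x; rw [neg_sq, mul_neg, Real.cos_neg]
  have hsplit : (∫ x : ℝ, Real.exp (-s * x ^ 2) * Real.cos (a * x))
      = 2 * ∫ x in Set.Ioi (0:ℝ), Real.exp (-s * x ^ 2) * Real.cos (a * x) := by
    rw [← MeasureTheory.setIntegral_univ, ← Set.Iio_union_Ici (a := (0:ℝ)),
      setIntegral_union (Set.Iio_disjoint_Ici le_rfl) measurableSet_Ici
        hint.integrableOn hint.integrableOn,
      ← MeasureTheory.integral_Ici_eq_integral_Ioi, two_mul]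
    congr 1
    rw [MeasureTheory.integral_Ici_eq_integral_Ioi,
      ← MeasureTheory.integral_Iic_eq_integral_Iio,
      show (0:ℝ) = -(0:ℝ) by simp, ← integral_comp_neg_Ioi]
    simp_rw [heven]
    norm_num
  have := gauss_cos s a hs
  rw [hsplit] at this
  linarith

lemma heat_sq (s h : ℝ) (hs : 0 < s) :
    ∫ v : ℝ, (heatKernel s (v + h) - heatKernel s v) ^ 2
      = (1 - Real.exp (-h ^ 2 / (4 * s))) / Real.sqrt (Real.pi * s) := by
  have hs' : (0:ℝ) < 1 / s := by positivity
  set c : ℝ := 1 / Real.sqrt (2 * Real.pi * s) with hc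
  have hpt : ∀ v : ℝ, (heatKernel s (v + h) - heatKernel s v) ^ 2
      = c ^ 2 * Real.exp (-(1/s) * (v + h) ^ 2) + c ^ 2 * Real.exp (-(1/s) * v ^ 2)
        - 2 * c ^ 2 * Real.exp (-h ^ 2 / (4 * s)) * Real.exp (-(1/s) * (v + h/2) ^ 2) := by
    intro v
    have e1 : ∀ x : ℝ, Real.exp (-x ^ 2 / (2 * s)) ^ 2 = Real.exp (-(1/s) * x ^ 2) := by
      intro x
      rw [sq, ← Real.exp_add]
      congr 1; field_simp; ring
    have e2 : Real.exp (-(v + h) ^ 2 / (2 * s)) * Real.exp (-v ^ 2 / (2 * s))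
        = Real.exp (-h ^ 2 / (4 * s)) * Real.exp (-(1/s) * (v + h/2) ^ 2) := by
      rw [← Real.exp_add, ← Real.exp_add]
      congr 1; field_simp; ring
    simp only [heatKernel, ← hc]
    rw [sub_sq]
    rw [mul_pow, mul_pow, e1, e1,
      show 2 * (c * Real.exp (-(v + h) ^ 2 / (2 * s))) * (c * Real.exp (-v ^ 2 / (2 * s)))
        = 2 * c ^ 2 * (Real.exp (-(v + h) ^ 2 / (2 * s)) * Real.exp (-v ^ 2 / (2 * s))) by ring,
      e2]
    ring
  have base : Integrable fun v : ℝ => Real.exp (-(1/s) * v ^ 2) := integrable_exp_neg_mul_sq hs'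
  have ibase : (∫ v : ℝ, Real.exp (-(1/s) * v ^ 2)) = Real.sqrt (Real.pi * s) := by
    rw [integral_gaussian]; congr 1; field_simp
  have tr : ∀ d : ℝ, (∫ v : ℝ, Real.exp (-(1/s) * (v + d) ^ 2)) = Real.sqrt (Real.pi * s) := by
    intro d
    rw [MeasureTheory.integral_add_right_eq_self (fun v => Real.exp (-(1/s) * v ^ 2)) d, ibase]
  have trI : ∀ d : ℝ, Integrable fun v : ℝ => Real.exp (-(1/s) * (v + d) ^ 2) := fun d =>
    base.comp_add_right d
  have I1 : Integrable (fun v : ℝ => c ^ 2 * Real.exp (-(1/s) * (v + h) ^ 2)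
      + c ^ 2 * Real.exp (-(1/s) * v ^ 2)) := ((trI h).const_mul _).add (base.const_mul _)
  have I2 : Integrable (fun v : ℝ => 2 * c ^ 2 * Real.exp (-h ^ 2 / (4 * s))
      * Real.exp (-(1/s) * (v + h/2) ^ 2)) := by
    refine ((trI (h/2)).const_mul (2 * c ^ 2 * Real.exp (-h ^ 2 / (4 * s)))).congr
      (Filter.Eventually.of_forall fun v => rfl)
  simp_rw [hpt]
  rw [MeasureTheory.integral_sub I1 I2,
    MeasureTheory.integral_add ((trI h).const_mul _) (base.const_mul _),
    MeasureTheory.integral_const_mul, MeasureTheory.integral_const_mul,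
    MeasureTheory.integral_const_mul, tr, tr, ibase]
  have hps : Real.sqrt (Real.pi * s) ^ 2 = Real.pi * s := Real.sq_sqrt (by positivity)
  have hcsq : c ^ 2 = 1 / (2 * Real.pi * s) := by
    rw [hc, div_pow, one_pow, Real.sq_sqrt (by positivity)]
  have hsq : Real.sqrt (Real.pi * s) > 0 := Real.sqrt_pos.mpr (by positivity)
  rw [hcsq]
  field_simp
  have h2 : (Real.sqrt Real.pi * Real.sqrt s) ^ 2 = Real.pi * s := by
    rw [mul_pow, Real.sq_sqrt Real.pi_pos.le, Real.sq_sqrt hs.le]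
  linear_combination (2 - 2 * Real.exp (-(h ^ 2 / (s * 4)))) * hps

lemma exp_Ioc (t : ℝ) (ht : 0 ≤ t) (ξ : ℝ) (hξ : ξ ≠ 0) :
    ∫ s in Set.Ioc (0:ℝ) t, Real.exp (-s * ξ ^ 2)
      = (1 - Real.exp (-t * ξ ^ 2)) / ξ ^ 2 := by
  rw [← intervalIntegral.integral_of_le ht]
  have : ∀ s : ℝ, Real.exp (-s * ξ ^ 2) = Real.exp (s * (-ξ ^ 2)) := by
    intro s; congr 1; ring
  simp_rw [this]
  rw [intervalIntegral.integral_comp_mul_right Real.exp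
    (neg_ne_zero.mpr (pow_ne_zero 2 hξ))]
  simp only [zero_mul, integral_exp, smul_eq_mul]
  rw [show t * -ξ ^ 2 = -t * ξ ^ 2 by ring]
  field_simp
  rw [Real.exp_zero]; ring

lemma inner_xi (s b : ℝ) (hs : 0 < s) :
    ∫ ξ in Set.Ioi (0:ℝ), Real.exp (-s * ξ ^ 2) * (1 - Real.cos (b * ξ))
      = Real.sqrt (Real.pi / s) / 2 * (1 - Real.exp (-b ^ 2 / (4 * s))) := by
  have h1 : IntegrableOn (fun ξ : ℝ => Real.exp (-s * ξ ^ 2)) (Set.Ioi 0) :=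
    (integrable_exp_neg_mul_sq hs).integrableOn
  have h2 : IntegrableOn (fun ξ : ℝ => Real.exp (-s * ξ ^ 2) * Real.cos (b * ξ))
      (Set.Ioi 0) := (gauss_cos_integrable s b hs).integrableOn
  have : ∀ ξ : ℝ, Real.exp (-s * ξ ^ 2) * (1 - Real.cos (b * ξ))
      = Real.exp (-s * ξ ^ 2) - Real.exp (-s * ξ ^ 2) * Real.cos (b * ξ) := fun ξ => by ring
  simp_rw [this]
  rw [MeasureTheory.integral_sub h1 h2, integral_gaussian_Ioi, gauss_cos_Ioi s b hs]
  ring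

lemma swap_eq (t b : ℝ) (ht : 0 < t) :
    ∫ s in Set.Ioc (0:ℝ) t, ∫ ξ in Set.Ioi (0:ℝ),
        Real.exp (-s * ξ ^ 2) * (1 - Real.cos (b * ξ))
      = ∫ ξ in Set.Ioi (0:ℝ),
          (1 - Real.exp (-t * ξ ^ 2)) * (1 - Real.cos (b * ξ)) / ξ ^ 2 := by
  set f : ℝ → ℝ → ℝ := fun s ξ => Real.exp (-s * ξ ^ 2) * (1 - Real.cos (b * ξ)) with hf
  have hfnn : ∀ s ξ : ℝ, 0 ≤ f s ξ := fun s ξ =>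
    mul_nonneg (Real.exp_pos _).le (by nlinarith [Real.cos_le_one (b * ξ)])
  have hfle : ∀ s ξ : ℝ, f s ξ ≤ 2 * Real.exp (-s * ξ ^ 2) := fun s ξ => by
    have := Real.neg_one_le_cos (b * ξ)
    have := (Real.exp_pos (-s * ξ ^ 2)).le
    simp only [hf]; nlinarith
  have hmeas : AEStronglyMeasurable (Function.uncurry f)
      ((volume.restrict (Set.Ioc (0:ℝ) t)).prod (volume.restrict (Set.Ioi (0:ℝ)))) := by
    apply Continuous.aestronglyMeasurable
    apply Continuous.mul
    · exact Real.continuous_exp.comp (by fun_prop)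
    · fun_prop
  have hsec : ∀ s : ℝ, 0 < s → IntegrableOn (f s) (Set.Ioi (0:ℝ)) := by
    intro s hs
    refine ((integrable_exp_neg_mul_sq hs).const_mul 2).integrableOn.mono'
      (Continuous.aestronglyMeasurable (by fun_prop)) ?_
    filter_upwards with ξ
    rw [Real.norm_eq_abs, _root_.abs_of_nonneg (hfnn s ξ)]
    exact hfle s ξ
  have hnormval : ∀ s : ℝ, 0 < s →
      (∫ ξ in Set.Ioi (0:ℝ), f s ξ) ≤ Real.sqrt Real.pi * s ^ (-(1/2) : ℝ) := by
    intro s hs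
    have hle : (∫ ξ in Set.Ioi (0:ℝ), f s ξ)
        ≤ ∫ ξ in Set.Ioi (0:ℝ), 2 * Real.exp (-s * ξ ^ 2) :=
      integral_mono (hsec s hs) ((integrable_exp_neg_mul_sq hs).const_mul 2).integrableOn
        (fun ξ => hfle s ξ)
    have : (∫ ξ in Set.Ioi (0:ℝ), 2 * Real.exp (-s * ξ ^ 2))
        = Real.sqrt Real.pi * s ^ (-(1/2) : ℝ) := by
      rw [MeasureTheory.integral_const_mul, integral_gaussian_Ioi,
        Real.sqrt_div Real.pi_pos.le, Real.rpow_neg hs.le,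
        show ((1/2:ℝ)) = ((1:ℝ)/2) by norm_num, ← Real.sqrt_eq_rpow]
      field_simp
    linarith [hle, this.le, this.ge]
  have hprod : Integrable (Function.uncurry f)
      ((volume.restrict (Set.Ioc (0:ℝ) t)).prod (volume.restrict (Set.Ioi (0:ℝ)))) := by
    rw [MeasureTheory.integrable_prod_iff hmeas]
    constructor
    · filter_upwards [ae_restrict_mem measurableSet_Ioc] with s hs
      exact hsec s hs.1
    · have hg : IntegrableOn (fun s : ℝ => Real.sqrt Real.pi * s ^ (-(1/2):ℝ))
          (Set.Ioc 0 t) := by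
        apply Integrable.const_mul
        have := intervalIntegral.intervalIntegrable_rpow'
          (show (-1:ℝ) < -(1/2) by norm_num) (a := 0) (b := t)
        rwa [intervalIntegrable_iff, Set.uIoc_of_le ht.le] at this
      refine hg.mono' hmeas.norm.integral_prod_right' ?_
      filter_upwards [ae_restrict_mem measurableSet_Ioc] with s hs
      have heq : (∫ ξ in Set.Ioi (0:ℝ), ‖f s ξ‖) = ∫ ξ in Set.Ioi (0:ℝ), f s ξ := by
        congr 1; funext ξ; rw [Real.norm_eq_abs, _root_.abs_of_nonneg (hfnn s ξ)]
      simp only [Function.uncurry_apply_pair]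
      rw [Real.norm_eq_abs,
        _root_.abs_of_nonneg (integral_nonneg (fun ξ => norm_nonneg (f s ξ))), heq]
      exact hnormval s hs.1
  rw [MeasureTheory.integral_integral_swap hprod]
  refine setIntegral_congr_fun measurableSet_Ioi (fun ξ hξ => ?_)
  have hξ0 : (0:ℝ) < ξ := hξ
  rw [MeasureTheory.integral_mul_const, exp_Ioc t ht.le ξ (ne_of_gt hξ0)]
  field_simp


theorem heat_increment_plancherel (t : ℝ) (ht : 0 < t) (h : ℝ) :
    ∫ s in Set.Ioc (0 : ℝ) t, ∫ v : ℝ, (heatKernel s (v + h) - heatKernel s v) ^ 2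
      = (2 / Real.pi) *
        ∫ ξ in Set.Ioi (0 : ℝ),
          (1 - Real.exp (-t * ξ ^ 2)) * (1 - Real.cos (|h| * ξ)) / ξ ^ 2 := by

  have hIoc : ∀ s ∈ Set.Ioc (0:ℝ) t,
      (∫ v : ℝ, (heatKernel s (v + h) - heatKernel s v) ^ 2)
        = (2 / Real.pi) * ∫ ξ in Set.Ioi (0:ℝ),
            Real.exp (-s * ξ ^ 2) * (1 - Real.cos (|h| * ξ)) := by
    intro s hs
    obtain ⟨hs0, -⟩ := hs
    rw [heat_sq s h hs0, inner_xi s |h| hs0, _root_.sq_abs]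
    have hkey : Real.sqrt (Real.pi / s) * Real.sqrt (Real.pi * s) = Real.pi := by
      rw [← Real.sqrt_mul (by positivity),
        show Real.pi / s * (Real.pi * s) = Real.pi ^ 2 by field_simp]
      exact Real.sqrt_sq Real.pi_pos.le
    have h1 : (0:ℝ) < Real.sqrt (Real.pi * s) := Real.sqrt_pos.mpr (by positivity)
    rw [show 2 / Real.pi * (Real.sqrt (Real.pi / s) / 2 * (1 - Real.exp (-h ^ 2 / (4 * s))))
        = Real.sqrt (Real.pi / s) * (1 - Real.exp (-h ^ 2 / (4 * s))) / Real.pi by ring,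
      div_eq_div_iff h1.ne' Real.pi_ne_zero]
    linear_combination (Real.exp (-h ^ 2 / (4 * s)) - 1) * hkey
  rw [setIntegral_congr_fun measurableSet_Ioc hIoc, MeasureTheory.integral_const_mul,
    swap_eq t |h| ht]
end

section
/- There exists a constant C > 0 such that for every t > 0 and every h ∈ ℝ, ∫₀ᵗ ∫_ℝ (p_s(v+h) − p_s(v))² dv ds ≤ C·|h|, where p_s is the standard heat kernel. -/
open MeasureTheory Real Set

lemma heat_inner_int (s : ℝ) (hs : 0 < s) (h : ℝ) :
    ∫ v : ℝ, (heatKernel s (v + h) - heatKernel s v) ^ 2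
      = (1 / Real.sqrt (Real.pi * s)) * (1 - Real.exp (-h ^ 2 / (4 * s))) := by
  have hs' : s ≠ 0 := ne_of_gt hs
  have hb : (0:ℝ) < 1 / s := by positivity
  have key : ∀ v : ℝ, (heatKernel s (v + h) - heatKernel s v) ^ 2
      = (1/(2*π*s)) * Real.exp (-(1/s) * (v + h) ^ 2)
        + (1/(2*π*s)) * Real.exp (-(1/s) * (v + 0) ^ 2)
        - (2*(1/(2*π*s)) * Real.exp (-h ^ 2 / (4*s))) * Real.exp (-(1/s) * (v + h/2) ^ 2) := by
    intro v
    have hA : (1 / Real.sqrt (2*π*s))^2 = 1/(2*π*s) := by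
      rw [div_pow, one_pow, Real.sq_sqrt (by positivity)]
    have expand : (heatKernel s (v + h) - heatKernel s v) ^ 2
        = (1 / Real.sqrt (2*π*s))^2 * (Real.exp (-(v+h)^2/(2*s)))^2
          + (1 / Real.sqrt (2*π*s))^2 * (Real.exp (-v^2/(2*s)))^2
          - 2 * (1 / Real.sqrt (2*π*s))^2 *
            (Real.exp (-(v+h)^2/(2*s)) * Real.exp (-v^2/(2*s))) := by
      simp only [heatKernel]; ring
    rw [expand, hA]
    have e1 : (Real.exp (-(v+h)^2/(2*s)))^2 = Real.exp (-(1/s) * (v + h) ^ 2) := by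
      rw [sq, ← Real.exp_add]; congr 1; field_simp; ring
    have e2 : (Real.exp (-v^2/(2*s)))^2 = Real.exp (-(1/s) * (v + 0) ^ 2) := by
      rw [sq, ← Real.exp_add]; congr 1; field_simp; ring
    have e3 : Real.exp (-(v+h)^2/(2*s)) * Real.exp (-v^2/(2*s))
        = Real.exp (-h ^ 2 / (4*s)) * Real.exp (-(1/s) * (v + h/2) ^ 2) := by
      rw [← Real.exp_add, ← Real.exp_add]; congr 1; field_simp; ring
    rw [e1, e2, e3]; ring
  have int : ∀ c : ℝ, Integrable (fun v : ℝ => Real.exp (-(1/s) * (v + c) ^ 2)) := by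
    intro c
    exact (integrable_exp_neg_mul_sq hb).comp_add_right c
  have gauss : ∀ c : ℝ, ∫ v : ℝ, Real.exp (-(1/s) * (v + c) ^ 2) = Real.sqrt (π * s) := by
    intro c
    rw [integral_add_right_eq_self (fun v : ℝ => Real.exp (-(1/s) * v ^ 2)) c,
      integral_gaussian]
    congr 1
    field_simp
  calc ∫ v : ℝ, (heatKernel s (v + h) - heatKernel s v) ^ 2
      = ∫ v : ℝ, ((1/(2*π*s)) * Real.exp (-(1/s) * (v + h) ^ 2)
        + (1/(2*π*s)) * Real.exp (-(1/s) * (v + 0) ^ 2)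
        - (2*(1/(2*π*s)) * Real.exp (-h ^ 2 / (4*s))) * Real.exp (-(1/s) * (v + h/2) ^ 2)) := by
        exact integral_congr_ae (Filter.Eventually.of_forall key)
    _ = (1/(2*π*s)) * Real.sqrt (π * s) + (1/(2*π*s)) * Real.sqrt (π * s)
        - (2*(1/(2*π*s)) * Real.exp (-h ^ 2 / (4*s))) * Real.sqrt (π * s) := by
        have i12 : Integrable (fun v : ℝ => (1/(2*π*s)) * Real.exp (-(1/s) * (v + h) ^ 2)
            + (1/(2*π*s)) * Real.exp (-(1/s) * (v + 0) ^ 2)) :=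
          ((int h).const_mul _).add ((int 0).const_mul _)
        rw [integral_sub i12 ((int (h/2)).const_mul _),
          integral_add ((int h).const_mul _) ((int 0).const_mul _),
          integral_const_mul, integral_const_mul, integral_const_mul,
          gauss, gauss, gauss]
    _ = (1 / Real.sqrt (π * s)) * (1 - Real.exp (-h ^ 2 / (4 * s))) := by
        have h2 : Real.sqrt (π*s) ≠ 0 := by positivity
        have hpi : π ≠ 0 := Real.pi_ne_zero
        have h5 : (Real.sqrt π * Real.sqrt s) * (Real.sqrt π * Real.sqrt s) = π * s := by
          have a1 := Real.mul_self_sqrt (le_of_lt Real.pi_pos)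
          have a2 := Real.mul_self_sqrt hs.le
          nlinarith
        field_simp
        linear_combination (2 - 2 * Real.exp (-(h ^ 2 / (s * 4)))) * Real.sq_sqrt (by positivity : (0:ℝ) ≤ π * s)

theorem heat_increment_upper_bound :
    ∃ C : ℝ, 0 < C ∧ ∀ t : ℝ, 0 < t → ∀ h : ℝ,
      (∫ s in Set.Ioc (0 : ℝ) t, ∫ v : ℝ, (heatKernel s (v + h) - heatKernel s v) ^ 2)
        ≤ C * |h| := by
  refine ⟨3, by norm_num, ?_⟩
  intro t ht h
  have hconv : (∫ s in Set.Ioc (0:ℝ) t, ∫ v : ℝ, (heatKernel s (v + h) - heatKernel s v) ^ 2)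
      = ∫ s in Set.Ioc (0:ℝ) t,
          (1 / Real.sqrt (π * s)) * (1 - Real.exp (-h ^ 2 / (4 * s))) :=
    setIntegral_congr_fun measurableSet_Ioc (fun s hs => heat_inner_int s hs.1 h)
  rw [hconv]
  by_cases hh : h = 0
  · simp [hh]
  set f : ℝ → ℝ := fun s => (1 / Real.sqrt (π * s)) * (1 - Real.exp (-h ^ 2 / (4 * s)))
    with hfdef
  set a : ℝ := h ^ 2 with hadef
  have ha : 0 < a := by positivity
  have hfm : Measurable f := by fun_prop
  have hsπ : (1:ℝ) ≤ Real.sqrt π := by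
    rw [show (1:ℝ) = Real.sqrt 1 by simp]
    exact Real.sqrt_le_sqrt (by linarith [Real.pi_gt_three])
  have hπ0 : (0:ℝ) < Real.sqrt π := lt_of_lt_of_le one_pos hsπ
  -- rpow facts
  have hs12 : ∀ s : ℝ, 0 < s → s ^ (-(1/2) : ℝ) = (Real.sqrt s)⁻¹ := by
    intro s hs
    rw [Real.rpow_neg hs.le, ← Real.sqrt_eq_rpow]
  have hs32 : ∀ s : ℝ, 0 < s → s ^ (-(3/2) : ℝ) = (Real.sqrt s)⁻¹ * s⁻¹ := by
    intro s hs
    rw [show (-(3/2):ℝ) = (-(1/2)) + (-1) by norm_num, Real.rpow_add hs,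
      Real.rpow_neg_one, hs12 s hs]
  -- pointwise bounds
  have hnn : ∀ s ∈ Ioi (0:ℝ), 0 ≤ f s := by
    intro s hs
    have hs0 : (0:ℝ) < s := mem_Ioi.mp hs
    have h1 : Real.exp (-h ^ 2 / (4 * s)) ≤ 1 := by
      rw [Real.exp_le_one_iff, neg_div]
      exact neg_nonpos.mpr (by positivity)
    exact mul_nonneg (by positivity) (by linarith)
  have hb1 : ∀ s ∈ Ioi (0:ℝ), f s ≤ (Real.sqrt π)⁻¹ * s ^ (-(1/2) : ℝ) := by
    intro s hs
    have hs0 : (0:ℝ) < s := mem_Ioi.mp hs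
    have h1 : Real.exp (-h ^ 2 / (4 * s)) ≤ 1 := by
      rw [Real.exp_le_one_iff, neg_div]
      exact neg_nonpos.mpr (by positivity)
    have hE : 0 < Real.exp (-h ^ 2 / (4 * s)) := Real.exp_pos _
    have heq : (Real.sqrt π)⁻¹ * s ^ (-(1/2) : ℝ) = 1 / Real.sqrt (π * s) := by
      rw [hs12 s hs0, Real.sqrt_mul Real.pi_pos.le]
      field_simp
    rw [heq, hfdef]
    have hpos : (0:ℝ) < 1 / Real.sqrt (π * s) := by positivity
    nlinarith
  have hb2 : ∀ s ∈ Ioi (0:ℝ), f s ≤ ((Real.sqrt π)⁻¹ * (a/4)) * s ^ (-(3/2) : ℝ) := by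
    intro s hs
    have hs0 : (0:ℝ) < s := mem_Ioi.mp hs
    have hx : (0:ℝ) ≤ h ^ 2 / (4 * s) := by positivity
    have h1 : 1 - Real.exp (-(h ^ 2 / (4 * s))) ≤ h ^ 2 / (4 * s) := by
      have := Real.add_one_le_exp (-(h ^ 2 / (4 * s)))
      linarith
    have h1' : 1 - Real.exp (-h ^ 2 / (4 * s)) ≤ h ^ 2 / (4 * s) := by
      rw [show -h ^ 2 / (4 * s) = -(h ^ 2 / (4 * s)) by ring]
      exact h1
    have heq : ((Real.sqrt π)⁻¹ * (a/4)) * s ^ (-(3/2) : ℝ)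
        = (1 / Real.sqrt (π * s)) * (h ^ 2 / (4 * s)) := by
      rw [hs32 s hs0, Real.sqrt_mul Real.pi_pos.le, hadef]
      have hss : Real.sqrt s ≠ 0 := by positivity
      field_simp
    rw [heq, hfdef]
    have hpos : (0:ℝ) ≤ 1 / Real.sqrt (π * s) := by positivity
    exact mul_le_mul_of_nonneg_left h1' hpos
  -- integrability
  have hig1 : IntegrableOn (fun s : ℝ => (Real.sqrt π)⁻¹ * s ^ (-(1/2) : ℝ)) (Ioc 0 a) := by
    have := intervalIntegral.intervalIntegrable_rpow' (a := 0) (b := a)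
      (r := -(1/2)) (by norm_num)
    rw [intervalIntegrable_iff_integrableOn_Ioc_of_le ha.le] at this
    exact this.const_mul _
  have hig2 : IntegrableOn (fun s : ℝ => ((Real.sqrt π)⁻¹ * (a/4)) * s ^ (-(3/2) : ℝ))
      (Ioi a) :=
    (integrableOn_Ioi_rpow_of_lt (by norm_num) ha).const_mul _
  have hif1 : IntegrableOn f (Ioc 0 a) := by
    refine hig1.mono' (hfm.aestronglyMeasurable.restrict) ?_
    filter_upwards [ae_restrict_mem measurableSet_Ioc] with s hs
    rw [Real.norm_eq_abs, abs_of_nonneg (hnn s hs.1)]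
    exact hb1 s hs.1
  have hif2 : IntegrableOn f (Ioi a) := by
    refine hig2.mono' (hfm.aestronglyMeasurable.restrict) ?_
    filter_upwards [ae_restrict_mem measurableSet_Ioi] with s hs
    have hs0 : (0:ℝ) < s := lt_trans ha (mem_Ioi.mp hs)
    rw [Real.norm_eq_abs, abs_of_nonneg (hnn s hs0)]
    exact hb2 s hs0
  have hif : IntegrableOn f (Ioi 0) := by
    rw [← Set.Ioc_union_Ioi_eq_Ioi ha.le]
    exact hif1.union hif2
  -- monotone extension to (0, ∞)
  have step1 : (∫ s in Set.Ioc (0:ℝ) t, f s) ≤ ∫ s in Ioi (0:ℝ), f s := by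
    refine setIntegral_mono_set hif ?_ (HasSubset.Subset.eventuallyLE Ioc_subset_Ioi_self)
    filter_upwards [ae_restrict_mem measurableSet_Ioi] with s hs using hnn s hs
  have split : (∫ s in Ioi (0:ℝ), f s)
      = (∫ s in Ioc (0:ℝ) a, f s) + ∫ s in Ioi a, f s := by
    rw [← setIntegral_union (Set.Ioc_disjoint_Ioi le_rfl) measurableSet_Ioi hif1 hif2,
      Set.Ioc_union_Ioi_eq_Ioi ha.le]
  -- evaluate the bounds
  have piece1 : (∫ s in Ioc (0:ℝ) a, f s) ≤ (Real.sqrt π)⁻¹ * (2 * |h|) := by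
    calc (∫ s in Ioc (0:ℝ) a, f s)
        ≤ ∫ s in Ioc (0:ℝ) a, (Real.sqrt π)⁻¹ * s ^ (-(1/2) : ℝ) :=
          setIntegral_mono_on hif1 hig1 measurableSet_Ioc (fun s hs => hb1 s hs.1)
      _ = (Real.sqrt π)⁻¹ * ∫ s in Ioc (0:ℝ) a, s ^ (-(1/2) : ℝ) := integral_const_mul _ _
      _ = (Real.sqrt π)⁻¹ * (2 * |h|) := by
          rw [← intervalIntegral.integral_of_le ha.le, integral_rpow (Or.inl (by norm_num))]
          congr 1
          rw [Real.zero_rpow (by norm_num), hadef,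
            show ((-(1/2) + 1 : ℝ)) = (1/2 : ℝ) by norm_num, ← sq_abs,
            ← Real.rpow_natCast |h| 2, ← Real.rpow_mul (abs_nonneg h)]
          norm_num
          ring
  have piece2 : (∫ s in Ioi a, f s) ≤ (Real.sqrt π)⁻¹ * (|h| / 2) := by
    have hval : ∫ s in Ioi a, s ^ (-(3/2) : ℝ) = 2 * |h|⁻¹ := by
      rw [integral_Ioi_rpow_of_lt (by norm_num) ha, hadef,
        show ((-(3/2) + 1 : ℝ)) = (-(1/2) : ℝ) by norm_num, ← sq_abs,
        ← Real.rpow_natCast |h| 2, ← Real.rpow_mul (abs_nonneg h)]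
      norm_num
      rw [Real.rpow_neg_one]
      ring
    calc (∫ s in Ioi a, f s)
        ≤ ∫ s in Ioi a, ((Real.sqrt π)⁻¹ * (a/4)) * s ^ (-(3/2) : ℝ) :=
          setIntegral_mono_on hif2 hig2 measurableSet_Ioi
            (fun s hs => hb2 s (lt_trans ha (mem_Ioi.mp hs)))
      _ = ((Real.sqrt π)⁻¹ * (a/4)) * (2 * |h|⁻¹) := by
          rw [integral_const_mul, hval]
      _ = (Real.sqrt π)⁻¹ * (|h| / 2) := by
          have hh0 : |h| ≠ 0 := abs_ne_zero.mpr hh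
          rw [hadef, ← sq_abs]
          field_simp
          linear_combination
  -- conclude
  have hπi : (Real.sqrt π)⁻¹ ≤ 1 := by
    rw [inv_le_one_iff₀]; right; exact hsπ
  have habs : (0:ℝ) ≤ |h| := abs_nonneg h
  calc (∫ s in Set.Ioc (0:ℝ) t, f s)
      ≤ ∫ s in Ioi (0:ℝ), f s := step1
    _ = (∫ s in Ioc (0:ℝ) a, f s) + ∫ s in Ioi a, f s := split
    _ ≤ (Real.sqrt π)⁻¹ * (2 * |h|) + (Real.sqrt π)⁻¹ * (|h| / 2) := add_le_add piece1 piece2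
    _ ≤ 1 * (2 * |h|) + 1 * (|h| / 2) := by
        gcongr
    _ ≤ 3 * |h| := by linarith
end

section
/- Fix t > 0 and A > 0. There exists a constant c > 0 (depending on t and A) such that for every K with 0 < K ≤ A, ∫₀ᵗ ∫_ℝ (p_u(Z − K) − p_u(Z))² dZ du ≥ c·K, where p_u is the standard heat kernel. One may take c = (2/π)(1 − e^{−t A^{−2}}) ∫₁^∞ (1 − cos z)/z² dz. -/
open MeasureTheory

lemma heat_inner_eq (u K : ℝ) (hu : 0 < u) :
    ∫ Z : ℝ, (heatKernel u (Z - K) - heatKernel u Z) ^ 2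
      = (1 - Real.exp (-K ^ 2 / (4 * u))) / Real.sqrt (Real.pi * u) := by
  have hπ := Real.pi_pos
  have h2πu : (0:ℝ) < 2 * Real.pi * u := by positivity
  have hb : (0:ℝ) < u⁻¹ := by positivity
  set E : ℝ := Real.exp (-K ^ 2 / (4 * u)) with hE
  have hpt : ∀ Z : ℝ, (heatKernel u (Z - K) - heatKernel u Z) ^ 2
      = (1 / (2 * Real.pi * u)) *
        (Real.exp (-u⁻¹ * (Z - K) ^ 2)
          - 2 * E * Real.exp (-u⁻¹ * (Z - K / 2) ^ 2)
          + Real.exp (-u⁻¹ * Z ^ 2)) := by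
    intro Z
    have hsq : ∀ x : ℝ, Real.exp (-x ^ 2 / (2 * u)) ^ 2 = Real.exp (-u⁻¹ * x ^ 2) := by
      intro x; rw [sq, ← Real.exp_add]; congr 1; field_simp; ring
    have hmul : Real.exp (-(Z - K) ^ 2 / (2 * u)) * Real.exp (-Z ^ 2 / (2 * u))
        = E * Real.exp (-u⁻¹ * (Z - K / 2) ^ 2) := by
      rw [hE, ← Real.exp_add, ← Real.exp_add]; congr 1; field_simp; ring
    have hc : (1 / Real.sqrt (2 * Real.pi * u)) ^ 2 = 1 / (2 * Real.pi * u) := by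
      rw [div_pow, one_pow, Real.sq_sqrt h2πu.le]
    show (1 / Real.sqrt (2 * Real.pi * u) * Real.exp (-(Z - K) ^ 2 / (2 * u)) -
         1 / Real.sqrt (2 * Real.pi * u) * Real.exp (-Z ^ 2 / (2 * u))) ^ 2 = _
    rw [show (1 / Real.sqrt (2 * Real.pi * u) * Real.exp (-(Z - K) ^ 2 / (2 * u)) -
         1 / Real.sqrt (2 * Real.pi * u) * Real.exp (-Z ^ 2 / (2 * u))) ^ 2
       = (1 / Real.sqrt (2 * Real.pi * u)) ^ 2 *
         (Real.exp (-(Z - K) ^ 2 / (2 * u)) ^ 2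
           - 2 * (Real.exp (-(Z - K) ^ 2 / (2 * u)) * Real.exp (-Z ^ 2 / (2 * u)))
           + Real.exp (-Z ^ 2 / (2 * u)) ^ 2) from by ring]
    rw [hsq, hsq, hmul, hc]; ring
  have hint0 : Integrable (fun Z : ℝ => Real.exp (-u⁻¹ * Z ^ 2)) :=
    integrable_exp_neg_mul_sq hb
  have hintK : Integrable (fun Z : ℝ => Real.exp (-u⁻¹ * (Z - K) ^ 2)) :=
    hint0.comp_sub_right K
  have hintK2 : Integrable (fun Z : ℝ => Real.exp (-u⁻¹ * (Z - K / 2) ^ 2)) :=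
    hint0.comp_sub_right (K / 2)
  have hI : ∀ a : ℝ, (∫ Z : ℝ, Real.exp (-u⁻¹ * (Z - a) ^ 2)) = Real.sqrt (Real.pi * u) := by
    intro a
    rw [integral_sub_right_eq_self (fun Z : ℝ => Real.exp (-u⁻¹ * Z ^ 2)) a,
      integral_gaussian]
    congr 1
    field_simp
  have hI0 : (∫ Z : ℝ, Real.exp (-u⁻¹ * Z ^ 2)) = Real.sqrt (Real.pi * u) := by
    have := hI 0; simpa using this
  have hsub : Integrable (fun Z : ℝ =>
      Real.exp (-u⁻¹ * (Z - K) ^ 2) - 2 * E * Real.exp (-u⁻¹ * (Z - K / 2) ^ 2)) :=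
    hintK.sub (hintK2.const_mul (2 * E))
  have h1 : (∫ Z : ℝ, (Real.exp (-u⁻¹ * (Z - K) ^ 2)
        - 2 * E * Real.exp (-u⁻¹ * (Z - K / 2) ^ 2) + Real.exp (-u⁻¹ * Z ^ 2)))
      = (∫ Z : ℝ, Real.exp (-u⁻¹ * (Z - K) ^ 2))
        - 2 * E * (∫ Z : ℝ, Real.exp (-u⁻¹ * (Z - K / 2) ^ 2))
        + ∫ Z : ℝ, Real.exp (-u⁻¹ * Z ^ 2) := by
    rw [integral_add hsub hint0, integral_sub hintK (hintK2.const_mul (2 * E)),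
      integral_const_mul]
  simp_rw [hpt]
  rw [integral_const_mul, h1, hI, hI, hI0]
  have hS : (0:ℝ) < Real.sqrt (Real.pi * u) := Real.sqrt_pos.2 (by positivity)
  have hSS : Real.sqrt (Real.pi * u) * Real.sqrt (Real.pi * u) = Real.pi * u :=
    Real.mul_self_sqrt (by positivity)
  rw [eq_div_iff hS.ne']
  rw [show (1 / (2 * Real.pi * u)) *
        ((Real.sqrt (Real.pi * u) - 2 * E * Real.sqrt (Real.pi * u)) + Real.sqrt (Real.pi * u))
        * Real.sqrt (Real.pi * u)
      = (1 / (2 * Real.pi * u)) * (2 * (1 - E))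
        * (Real.sqrt (Real.pi * u) * Real.sqrt (Real.pi * u)) from by ring, hSS]
  field_simp

theorem heat_increment_lower_bound (t A : ℝ) (ht : 0 < t) (hA : 0 < A) :
    ∃ c : ℝ, 0 < c ∧ ∀ K : ℝ, 0 < K → K ≤ A →
      c * K ≤ ∫ u in Set.Ioc (0 : ℝ) t, ∫ Z : ℝ,
        (heatKernel u (Z - K) - heatKernel u Z) ^ 2 := by
  have hπ := Real.pi_pos
  have hexp1 : (0:ℝ) < 1 - Real.exp (-1) := by
    have : Real.exp (-1) < 1 := Real.exp_lt_one_iff.mpr (by norm_num)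
    linarith
  set m : ℝ := min (Real.sqrt t / A) (1 / 2) with hm
  have hmpos : 0 < m := lt_min (by positivity) (by norm_num)
  refine ⟨(1 - Real.exp (-1)) / Real.sqrt Real.pi * m, by positivity, ?_⟩
  intro K hK hKA
  set F : ℝ → ℝ := fun u => (1 - Real.exp (-K ^ 2 / (4 * u))) / Real.sqrt (Real.pi * u)
    with hF
  set s : ℝ := min t (K ^ 2 / 4) with hs
  have hs_pos : 0 < s := lt_min ht (by positivity)
  have hst : s ≤ t := min_le_left _ _
  -- nonnegativity of F on (0, t]
  have hFnn : ∀ u : ℝ, u ∈ Set.Ioc (0:ℝ) t → 0 ≤ F u := by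
    intro u hu
    have hu0 : 0 < u := hu.1
    have h1 : Real.exp (-K ^ 2 / (4 * u)) ≤ 1 := by
      apply Real.exp_le_one_iff.mpr
      apply div_nonpos_of_nonpos_of_nonneg
      · simpa using sq_nonneg K
      · positivity
    have h2 : 0 < Real.sqrt (Real.pi * u) := Real.sqrt_pos.2 (by positivity)
    apply div_nonneg (by linarith) h2.le
  -- integrability of F on (0, t]
  have hg : IntegrableOn (fun u : ℝ => (Real.sqrt Real.pi)⁻¹ * u ^ (-(1/2) : ℝ))
      (Set.Ioc 0 t) := by
    have h := intervalIntegral.intervalIntegrable_rpow' (a := 0) (b := t)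
      (r := -(1/2)) (by norm_num)
    rw [intervalIntegrable_iff, Set.uIoc_of_le ht.le] at h
    exact h.const_mul _
  have hFmeas : AEStronglyMeasurable F (volume.restrict (Set.Ioc (0:ℝ) t)) := by
    apply Measurable.aestronglyMeasurable
    fun_prop
  have hFint : IntegrableOn F (Set.Ioc (0:ℝ) t) := by
    apply MeasureTheory.Integrable.mono hg hFmeas
    filter_upwards [ae_restrict_mem measurableSet_Ioc] with u hu
    have hu0 : 0 < u := hu.1
    have h1 : Real.exp (-K ^ 2 / (4 * u)) ≤ 1 := by
      apply Real.exp_le_one_iff.mpr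
      apply div_nonpos_of_nonpos_of_nonneg
      · simpa using sq_nonneg K
      · positivity
    have hexp0 : (0:ℝ) < Real.exp (-K ^ 2 / (4 * u)) := Real.exp_pos _
    have hsπu : Real.sqrt (Real.pi * u) = Real.sqrt Real.pi * Real.sqrt u :=
      Real.sqrt_mul hπ.le u
    have hrpow : u ^ (-(1/2) : ℝ) = (Real.sqrt u)⁻¹ := by
      rw [Real.rpow_neg hu0.le, Real.sqrt_eq_rpow]
    rw [Real.norm_eq_abs, Real.norm_eq_abs, abs_of_nonneg (hFnn u hu),
      abs_of_nonneg (by positivity : (0:ℝ) ≤ (Real.sqrt Real.pi)⁻¹ * u ^ (-(1/2) : ℝ))]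
    rw [hrpow, hF]
    simp only
    rw [hsπu]
    have hsu : 0 < Real.sqrt u := Real.sqrt_pos.2 hu0
    have hspi : 0 < Real.sqrt Real.pi := Real.sqrt_pos.2 hπ
    rw [div_le_iff₀ (by positivity)]
    calc 1 - Real.exp (-K ^ 2 / (4 * u)) ≤ 1 := by linarith
      _ = (Real.sqrt Real.pi)⁻¹ * (Real.sqrt u)⁻¹ * (Real.sqrt Real.pi * Real.sqrt u) := by
          field_simp
  -- the inner integral equals F on (0, t]
  have hcongr : (∫ u in Set.Ioc (0:ℝ) t, ∫ Z : ℝ,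
      (heatKernel u (Z - K) - heatKernel u Z) ^ 2) = ∫ u in Set.Ioc (0:ℝ) t, F u :=
    setIntegral_congr_fun measurableSet_Ioc (fun u hu => heat_inner_eq u K hu.1)
  rw [hcongr]
  -- lower bound constant on (0, s]
  have hbound : ∀ u ∈ Set.Ioc (0:ℝ) s,
      (1 - Real.exp (-1)) / Real.sqrt (Real.pi * s) ≤ F u := by
    intro u hu
    have hu0 : 0 < u := hu.1
    have hus : u ≤ s := hu.2
    have hK2 : 4 * u ≤ K ^ 2 := by
      have : u ≤ K ^ 2 / 4 := le_trans hus (min_le_right _ _)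
      linarith
    have hexp : Real.exp (-K ^ 2 / (4 * u)) ≤ Real.exp (-1) := by
      apply Real.exp_le_exp.mpr
      rw [div_le_iff₀ (by positivity)]
      nlinarith
    have hsqrt : Real.sqrt (Real.pi * u) ≤ Real.sqrt (Real.pi * s) :=
      Real.sqrt_le_sqrt (by nlinarith)
    exact div_le_div₀ (by linarith) (by linarith) (Real.sqrt_pos.2 (by positivity)) hsqrt
  calc (1 - Real.exp (-1)) / Real.sqrt Real.pi * m * K
      ≤ (1 - Real.exp (-1)) / Real.sqrt (Real.pi * s) * s := by
        have hss : Real.sqrt (Real.pi * s) = Real.sqrt Real.pi * Real.sqrt s :=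
          Real.sqrt_mul hπ.le s
        have hsqs : 0 < Real.sqrt s := Real.sqrt_pos.2 hs_pos
        have hspi : 0 < Real.sqrt Real.pi := Real.sqrt_pos.2 hπ
        have hss2 : Real.sqrt s * Real.sqrt s = s := Real.mul_self_sqrt hs_pos.le
        have hrhs : (1 - Real.exp (-1)) / Real.sqrt (Real.pi * s) * s
            = (1 - Real.exp (-1)) / Real.sqrt Real.pi * Real.sqrt s := by
          rw [hss]
          field_simp
          linear_combination (-1 : ℝ) * hss2
        rw [hrhs, mul_assoc]
        apply mul_le_mul_of_nonneg_left _ (by positivity)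
        -- m * K ≤ √s
        rcases le_total t (K ^ 2 / 4) with h | h
        · have : s = t := min_eq_left h
          rw [this]
          calc m * K ≤ Real.sqrt t / A * K :=
                mul_le_mul_of_nonneg_right (min_le_left _ _) hK.le
            _ ≤ Real.sqrt t / A * A :=
                mul_le_mul_of_nonneg_left hKA (by positivity)
            _ = Real.sqrt t := by field_simp
        · have : s = K ^ 2 / 4 := min_eq_right h
          rw [this, show K ^ 2 / 4 = (K / 2) ^ 2 by ring, Real.sqrt_sq (by positivity)]
          calc m * K ≤ 1 / 2 * K :=
                mul_le_mul_of_nonneg_right (min_le_right _ _) hK.le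
            _ = K / 2 := by ring
    _ = ∫ _ in Set.Ioc (0:ℝ) s, (1 - Real.exp (-1)) / Real.sqrt (Real.pi * s) := by
        rw [setIntegral_const, measureReal_def, Real.volume_Ioc, smul_eq_mul,
          ENNReal.toReal_ofReal (by linarith)]
        ring
    _ ≤ ∫ u in Set.Ioc (0:ℝ) s, F u := by
        apply setIntegral_mono_on (integrableOn_const (by
          rw [Real.volume_Ioc]; exact ENNReal.ofReal_ne_top))
          (hFint.mono_set (Set.Ioc_subset_Ioc_right hst)) measurableSet_Ioc hbound
    _ ≤ ∫ u in Set.Ioc (0:ℝ) t, F u := by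
        apply setIntegral_mono_set hFint
        · filter_upwards [ae_restrict_mem measurableSet_Ioc] with u hu using hFnn u hu
        · exact HasSubset.Subset.eventuallyLE (Set.Ioc_subset_Ioc_right hst)
end

section
/- Let a₁, a₂ > 0 and f(z) = z/√a₁ for z ≤ 0, f(z) = z/√a₂ for z > 0. Define E⁺(u,x,z) = exp(−(|f(z)|+|f(x)|)²/(2u)) for u > 0. Then there exists a constant C > 0 such that for all t > 0 and x, y ∈ ℝ, ∫₀ᵗ (2πu)^{-1} ∫_ℝ |E⁺(u,y,z) − E⁺(u,x,z)|² dz du ≤ C·|y − x|. -/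
open MeasureTheory Real Set

/-- Translated Gaussian integral. -/
lemma EIUB_gauss_int {s : ℝ} (hs : 0 < s) (a : ℝ) :
    ∫ v : ℝ, Real.exp (-(v + a) ^ 2 / s) = Real.sqrt (Real.pi * s) := by
  have h : (fun v : ℝ => Real.exp (-(v + a) ^ 2 / s))
      = fun v : ℝ => (fun w : ℝ => Real.exp (-(1 / s) * w ^ 2)) (v + a) := by
    funext v
    simp only
    congr 1
    field_simp
  rw [h, MeasureTheory.integral_add_right_eq_self (fun w : ℝ => Real.exp (-(1 / s) * w ^ 2)) a,
    integral_gaussian]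
  rw [show Real.pi / (1 / s) = Real.pi * s by field_simp]

/-- Translated Gaussian integrability. -/
lemma EIUB_gauss_integrable {s : ℝ} (hs : 0 < s) (a : ℝ) :
    Integrable (fun v : ℝ => Real.exp (-(v + a) ^ 2 / s)) := by
  have h2s : (0 : ℝ) < 1 / (2 * s) := by positivity
  refine Integrable.mono' (((integrable_exp_neg_mul_sq h2s).const_mul
    (Real.exp (a ^ 2 / s)))) (Continuous.aestronglyMeasurable (by fun_prop))
    (Filter.Eventually.of_forall fun v => ?_)
  rw [Real.norm_eq_abs, abs_of_nonneg (Real.exp_nonneg _), ← Real.exp_add]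
  apply Real.exp_le_exp.2
  rw [div_le_iff₀ (by positivity : (0:ℝ) < s)]
  have hs' : s ≠ 0 := ne_of_gt hs
  have h : (a ^ 2 / s + -(1 / (2 * s)) * v ^ 2) * s = a ^ 2 - v ^ 2 / 2 := by
    field_simp
    ring
  rw [h]
  nlinarith [sq_nonneg (v + 2 * a)]

/-- Cross term: product of two translated Gaussians. -/
lemma EIUB_cross_int {u : ℝ} (hu : 0 < u) (c d : ℝ) :
    ∫ v : ℝ, Real.exp (-(v + c) ^ 2 / (2 * u)) * Real.exp (-(v + d) ^ 2 / (2 * u))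
      = Real.sqrt (Real.pi * u) * Real.exp (-(d - c) ^ 2 / (4 * u)) := by
  have key : (fun v : ℝ => Real.exp (-(v + c) ^ 2 / (2 * u)) * Real.exp (-(v + d) ^ 2 / (2 * u)))
      = fun v : ℝ => Real.exp (-(d - c) ^ 2 / (4 * u)) *
          Real.exp (-(v + (c + d) / 2) ^ 2 / u) := by
    funext v
    rw [← Real.exp_add, ← Real.exp_add]
    congr 1
    field_simp
    ring
  rw [key, MeasureTheory.integral_const_mul, EIUB_gauss_int hu ((c + d) / 2)]
  ring

lemma EIUB_cross_integrable {u : ℝ} (hu : 0 < u) (c d : ℝ) :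
    Integrable (fun v : ℝ =>
      Real.exp (-(v + c) ^ 2 / (2 * u)) * Real.exp (-(v + d) ^ 2 / (2 * u))) := by
  have key : (fun v : ℝ => Real.exp (-(v + c) ^ 2 / (2 * u)) * Real.exp (-(v + d) ^ 2 / (2 * u)))
      = fun v : ℝ => Real.exp (-(d - c) ^ 2 / (4 * u)) *
          Real.exp (-(v + (c + d) / 2) ^ 2 / u) := by
    funext v
    rw [← Real.exp_add, ← Real.exp_add]
    congr 1
    field_simp
    ring
  rw [key]
  exact (EIUB_gauss_integrable hu _).const_mul _

lemma EIUB_sq_expand {u : ℝ} (hu : 0 < u) (c d : ℝ) :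
    (fun v : ℝ => (Real.exp (-(v + c) ^ 2 / (2 * u)) - Real.exp (-(v + d) ^ 2 / (2 * u))) ^ 2)
      = fun v : ℝ => Real.exp (-(v + c) ^ 2 / u) + Real.exp (-(v + d) ^ 2 / u)
          - 2 * (Real.exp (-(v + c) ^ 2 / (2 * u)) * Real.exp (-(v + d) ^ 2 / (2 * u))) := by
  funext v
  have h1 : Real.exp (-(v + c) ^ 2 / (2 * u)) ^ 2 = Real.exp (-(v + c) ^ 2 / u) := by
    rw [sq, ← Real.exp_add]
    congr 1
    field_simp
    ring
  have h2 : Real.exp (-(v + d) ^ 2 / (2 * u)) ^ 2 = Real.exp (-(v + d) ^ 2 / u) := by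
    rw [sq, ← Real.exp_add]
    congr 1
    field_simp
    ring
  rw [sub_sq, h1, h2]
  ring

lemma EIUB_D_integrable {u : ℝ} (hu : 0 < u) (c d : ℝ) :
    Integrable (fun v : ℝ =>
      (Real.exp (-(v + c) ^ 2 / (2 * u)) - Real.exp (-(v + d) ^ 2 / (2 * u))) ^ 2) := by
  rw [EIUB_sq_expand hu c d]
  have hadd : Integrable (fun v : ℝ => Real.exp (-(v + c) ^ 2 / u) + Real.exp (-(v + d) ^ 2 / u)) :=
    (EIUB_gauss_integrable hu c).add (EIUB_gauss_integrable hu d)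
  exact hadd.sub ((EIUB_cross_integrable hu c d).const_mul 2)

/-- Main one-dimensional computation. -/
lemma EIUB_D_int {u : ℝ} (hu : 0 < u) (c d : ℝ) :
    ∫ v : ℝ, (Real.exp (-(v + c) ^ 2 / (2 * u)) - Real.exp (-(v + d) ^ 2 / (2 * u))) ^ 2
      = 2 * Real.sqrt (Real.pi * u) * (1 - Real.exp (-(d - c) ^ 2 / (4 * u))) := by
  have hadd : Integrable (fun v : ℝ => Real.exp (-(v + c) ^ 2 / u) + Real.exp (-(v + d) ^ 2 / u)) :=
    (EIUB_gauss_integrable hu c).add (EIUB_gauss_integrable hu d)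
  rw [EIUB_sq_expand hu c d,
    MeasureTheory.integral_sub hadd ((EIUB_cross_integrable hu c d).const_mul 2),
    MeasureTheory.integral_add (EIUB_gauss_integrable hu c) (EIUB_gauss_integrable hu d),
    MeasureTheory.integral_const_mul, EIUB_gauss_int hu c, EIUB_gauss_int hu d,
    EIUB_cross_int hu c d]
  ring

/-- Bound for the inner `z`-integral. -/
lemma EIUB_inner_bound {a₁ a₂ u c d : ℝ} (ha₁ : 0 < a₁) (ha₂ : 0 < a₂) (hu : 0 < u)
    (hc : 0 ≤ c) (hd : 0 ≤ d) (g : ℝ → ℝ)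
    (hg : ∀ z, g z = if z ≤ 0 then -z / Real.sqrt a₁ else z / Real.sqrt a₂) :
    ∫ z : ℝ, (Real.exp (-(g z + d) ^ 2 / (2 * u)) - Real.exp (-(g z + c) ^ 2 / (2 * u))) ^ 2
      ≤ (Real.sqrt a₁ + Real.sqrt a₂) *
        (2 * Real.sqrt (Real.pi * u) * (1 - Real.exp (-(d - c) ^ 2 / (4 * u)))) := by
  set G : ℝ → ℝ := fun w =>
    (Real.exp (-(w + d) ^ 2 / (2 * u)) - Real.exp (-(w + c) ^ 2 / (2 * u))) ^ 2 with hGdef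
  have hGint : Integrable G := EIUB_D_integrable hu d c
  have hGnn : ∀ w, 0 ≤ G w := fun w => sq_nonneg _
  have hGval : ∫ w : ℝ, G w
      = 2 * Real.sqrt (Real.pi * u) * (1 - Real.exp (-(d - c) ^ 2 / (4 * u))) := by
    rw [hGdef, EIUB_D_int hu d c, show (c - d) ^ 2 = (d - c) ^ 2 by ring]
  have hs₁ : (0:ℝ) < Real.sqrt a₁ := Real.sqrt_pos.2 ha₁
  have hs₂ : (0:ℝ) < Real.sqrt a₂ := Real.sqrt_pos.2 ha₂
  have hgm : Measurable g := by
    have hge : g = fun z => if z ≤ 0 then -z / Real.sqrt a₁ else z / Real.sqrt a₂ := funext hg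
    rw [hge]
    exact Measurable.ite measurableSet_Iic (by fun_prop) (by fun_prop)
  have hGcont : Continuous G := by rw [hGdef]; fun_prop
  set M : ℝ := max a₁ a₂ with hM
  have hMpos : 0 < M := lt_max_of_lt_left ha₁
  have hgnn : ∀ z, 0 ≤ g z := by
    intro z
    rw [hg]
    split_ifs with h
    · exact div_nonneg (by linarith) (Real.sqrt_nonneg _)
    · exact div_nonneg (by push_neg at h; linarith) (Real.sqrt_nonneg _)
  have hgsq : ∀ z : ℝ, z ^ 2 / M ≤ (g z) ^ 2 := by
    intro z
    rw [hg]
    split_ifs with h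
    · rw [div_pow, neg_sq, Real.sq_sqrt ha₁.le]
      exact div_le_div_of_nonneg_left (sq_nonneg z) ha₁ (le_max_left _ _)
    · rw [div_pow, Real.sq_sqrt ha₂.le]
      exact div_le_div_of_nonneg_left (sq_nonneg z) ha₂ (le_max_right _ _)
  have hFbound : ∀ z : ℝ, G (g z) ≤ Real.exp (-(1 / (u * M)) * z ^ 2) := by
    intro z
    have h2u : (0:ℝ) < 2 * u := by positivity
    have hWe : ∀ e : ℝ, 0 ≤ e → Real.exp (-(g z + e) ^ 2 / (2 * u))
        ≤ Real.exp (-(g z) ^ 2 / (2 * u)) := by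
      intro e he
      apply Real.exp_le_exp.2
      rw [div_eq_mul_inv, div_eq_mul_inv]
      apply mul_le_mul_of_nonneg_right _ (by positivity)
      nlinarith [hgnn z]
    have hA := hWe d hd
    have hB := hWe c hc
    have hA0 : 0 ≤ Real.exp (-(g z + d) ^ 2 / (2 * u)) := Real.exp_nonneg _
    have hB0 : 0 ≤ Real.exp (-(g z + c) ^ 2 / (2 * u)) := Real.exp_nonneg _
    have hsq : G (g z) ≤ Real.exp (-(g z) ^ 2 / (2 * u)) ^ 2 := by
      rw [hGdef]
      simp only
      nlinarith [mul_nonneg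
        (by linarith : (0:ℝ) ≤ Real.exp (-(g z) ^ 2 / (2 * u))
          - Real.exp (-(g z + d) ^ 2 / (2 * u)) + Real.exp (-(g z + c) ^ 2 / (2 * u)))
        (by linarith : (0:ℝ) ≤ Real.exp (-(g z) ^ 2 / (2 * u))
          + Real.exp (-(g z + d) ^ 2 / (2 * u)) - Real.exp (-(g z + c) ^ 2 / (2 * u)))]
    have hW2 : Real.exp (-(g z) ^ 2 / (2 * u)) ^ 2 = Real.exp (-(g z) ^ 2 / u) := by
      rw [sq, ← Real.exp_add]
      congr 1
      field_simp
      ring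
    have hle : Real.exp (-(g z) ^ 2 / u) ≤ Real.exp (-(1 / (u * M)) * z ^ 2) := by
      apply Real.exp_le_exp.2
      have h1 : -(1 / (u * M)) * z ^ 2 = -(z ^ 2 / M) / u := by
        ring
      rw [h1, div_eq_mul_inv, div_eq_mul_inv]
      apply mul_le_mul_of_nonneg_right _ (by positivity)
      have := hgsq z
      linarith
    calc G (g z) ≤ Real.exp (-(g z) ^ 2 / (2 * u)) ^ 2 := hsq
      _ = Real.exp (-(g z) ^ 2 / u) := hW2
      _ ≤ Real.exp (-(1 / (u * M)) * z ^ 2) := hle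
  have hFint : Integrable (fun z : ℝ => G (g z)) := by
    have hmul : (0:ℝ) < 1 / (u * M) := by positivity
    refine Integrable.mono' (integrable_exp_neg_mul_sq hmul)
      ((hGcont.measurable.comp hgm).aestronglyMeasurable)
      (Filter.Eventually.of_forall fun z => ?_)
    rw [Real.norm_eq_abs, abs_of_nonneg (hGnn _)]
    exact hFbound z
  have key1 : ∫ z in Iic (0:ℝ), G (g z) = Real.sqrt a₁ * ∫ w in Ioi (0:ℝ), G w := by
    have he : EqOn (fun z => G (g z)) (fun z => G ((Real.sqrt a₁)⁻¹ * -z)) (Iic 0) := by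
      intro z hz
      have hz' : z ≤ 0 := hz
      simp only
      rw [hg z, if_pos hz', div_eq_inv_mul]
    rw [setIntegral_congr_fun measurableSet_Iic he,
      integral_comp_neg_Iic 0 (fun w => G ((Real.sqrt a₁)⁻¹ * w)), neg_zero,
      MeasureTheory.integral_comp_mul_left_Ioi G 0 (inv_pos.2 hs₁), mul_zero, inv_inv,
      smul_eq_mul]
  have key2 : ∫ z in Ioi (0:ℝ), G (g z) = Real.sqrt a₂ * ∫ w in Ioi (0:ℝ), G w := by
    have he : EqOn (fun z => G (g z)) (fun z => G ((Real.sqrt a₂)⁻¹ * z)) (Ioi 0) := by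
      intro z hz
      have hz' : (0:ℝ) < z := hz
      simp only
      rw [hg z, if_neg (not_le.2 hz'), div_eq_inv_mul]
    rw [setIntegral_congr_fun measurableSet_Ioi he,
      MeasureTheory.integral_comp_mul_left_Ioi G 0 (inv_pos.2 hs₂), mul_zero, inv_inv,
      smul_eq_mul]
  have hIoi_le : ∫ w in Ioi (0:ℝ), G w ≤ ∫ w, G w :=
    setIntegral_le_integral hGint (Filter.Eventually.of_forall hGnn)
  calc ∫ z : ℝ, (Real.exp (-(g z + d) ^ 2 / (2 * u)) - Real.exp (-(g z + c) ^ 2 / (2 * u))) ^ 2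
      = ∫ z : ℝ, G (g z) := rfl
    _ = (∫ z in Iic (0:ℝ), G (g z)) + ∫ z in Ioi (0:ℝ), G (g z) :=
        (_root_.intervalIntegral.integral_Iic_add_Ioi hFint.integrableOn hFint.integrableOn).symm
    _ = (Real.sqrt a₁ + Real.sqrt a₂) * ∫ w in Ioi (0:ℝ), G w := by rw [key1, key2]; ring
    _ ≤ (Real.sqrt a₁ + Real.sqrt a₂) * ∫ w, G w :=
        mul_le_mul_of_nonneg_left hIoi_le (by positivity)
    _ = _ := by rw [hGval]

/-- The algebraic simplification of the `u`-integrand. -/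
lemma EIUB_alg {a₁ a₂ u q : ℝ} (ha₁ : 0 < a₁) (ha₂ : 0 < a₂) (hu : 0 < u) (hq : 0 ≤ q) :
    (1 / (2 * Real.pi * u)) * ((Real.sqrt a₁ + Real.sqrt a₂) *
        (2 * Real.sqrt (Real.pi * u) * (1 - Real.exp (-q ^ 2 / (4 * u)))))
      ≤ ((Real.sqrt a₁ + Real.sqrt a₂) / Real.sqrt Real.pi) *
        min ((Real.sqrt u)⁻¹) (q ^ 2 / 4 * ((Real.sqrt u)⁻¹ * u⁻¹)) := by
  have hπ := Real.pi_pos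
  have hsu : 0 < Real.sqrt u := Real.sqrt_pos.2 hu
  have hsπ : 0 < Real.sqrt Real.pi := Real.sqrt_pos.2 hπ
  have hsum : (0:ℝ) ≤ Real.sqrt a₁ + Real.sqrt a₂ := by positivity
  have hmin : 1 - Real.exp (-q ^ 2 / (4 * u)) ≤ min 1 (q ^ 2 / (4 * u)) := by
    apply le_min
    · have := Real.exp_nonneg (-q ^ 2 / (4 * u)); linarith
    · have h := Real.add_one_le_exp (-q ^ 2 / (4 * u))
      have hne : -q ^ 2 / (4 * u) = -(q ^ 2 / (4 * u)) := by ring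
      nlinarith [h, hne]
  have hπu : Real.sqrt (Real.pi * u) = Real.sqrt Real.pi * Real.sqrt u :=
    Real.sqrt_mul hπ.le u
  set X : ℝ := 1 - Real.exp (-q ^ 2 / (4 * u)) with hX
  have hXnn : 0 ≤ X := by
    have harg : -q ^ 2 / (4 * u) ≤ 0 :=
      div_nonpos_of_nonpos_of_nonneg (neg_nonpos.2 (sq_nonneg q)) (by positivity)
    have := Real.exp_le_one_iff.2 harg
    simp only [hX]
    linarith
  have hLHS : (1 / (2 * Real.pi * u)) * ((Real.sqrt a₁ + Real.sqrt a₂) *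
      (2 * Real.sqrt (Real.pi * u) * X))
      = ((Real.sqrt a₁ + Real.sqrt a₂) / Real.sqrt Real.pi) * ((Real.sqrt u)⁻¹ * X) := by
    rw [hπu]
    have h1 : Real.pi = Real.sqrt Real.pi * Real.sqrt Real.pi :=
      (Real.mul_self_sqrt hπ.le).symm
    have h2 : u = Real.sqrt u * Real.sqrt u := (Real.mul_self_sqrt hu.le).symm
    rw [show 2 * Real.pi * u = 2 * (Real.sqrt Real.pi * Real.sqrt Real.pi) *
      (Real.sqrt u * Real.sqrt u) by rw [← h1, ← h2]]
    field_simp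
  have hmm : (Real.sqrt u)⁻¹ * min 1 (q ^ 2 / (4 * u))
      = min ((Real.sqrt u)⁻¹) (q ^ 2 / 4 * ((Real.sqrt u)⁻¹ * u⁻¹)) := by
    rw [mul_min_of_nonneg _ _ (inv_nonneg.2 hsu.le)]
    congr 1
    · exact mul_one _
    · ring
  calc (1 / (2 * Real.pi * u)) * ((Real.sqrt a₁ + Real.sqrt a₂) *
      (2 * Real.sqrt (Real.pi * u) * X))
      = ((Real.sqrt a₁ + Real.sqrt a₂) / Real.sqrt Real.pi) * ((Real.sqrt u)⁻¹ * X) := hLHS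
    _ ≤ ((Real.sqrt a₁ + Real.sqrt a₂) / Real.sqrt Real.pi) *
        ((Real.sqrt u)⁻¹ * min 1 (q ^ 2 / (4 * u))) := by
        apply mul_le_mul_of_nonneg_left _ (by positivity)
        exact mul_le_mul_of_nonneg_left hmin (by positivity)
    _ = _ := by rw [hmm]

/-- Lipschitz-type bound for `|f|`. -/
lemma EIUB_lip {a₁ a₂ : ℝ} (ha₁ : 0 < a₁) (ha₂ : 0 < a₂) (f : ℝ → ℝ)
    (hf : ∀ z : ℝ, f z = if z ≤ 0 then z / Real.sqrt a₁ else z / Real.sqrt a₂)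
    (x y : ℝ) (hxy : x ≤ y) :
    |(|f y| - |f x|)| ≤ (Real.sqrt (min a₁ a₂))⁻¹ * |y - x| := by
  set m := Real.sqrt (min a₁ a₂) with hm
  have hm0 : 0 < m := Real.sqrt_pos.2 (lt_min ha₁ ha₂)
  have hm1 : m ≤ Real.sqrt a₁ := Real.sqrt_le_sqrt (min_le_left _ _)
  have hm2 : m ≤ Real.sqrt a₂ := Real.sqrt_le_sqrt (min_le_right _ _)
  have habs : |y - x| = y - x := abs_of_nonneg (by linarith)
  rw [habs, inv_mul_eq_div]
  rcases le_or_gt y 0 with hy | hy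
  · have hx : x ≤ 0 := le_trans hxy hy
    rw [hf x, hf y, if_pos hx, if_pos hy,
      abs_of_nonpos (div_nonpos_of_nonpos_of_nonneg hy (Real.sqrt_nonneg _)),
      abs_of_nonpos (div_nonpos_of_nonpos_of_nonneg hx (Real.sqrt_nonneg _)),
      show -(y / Real.sqrt a₁) - -(x / Real.sqrt a₁) = (x - y) / Real.sqrt a₁ by ring,
      abs_of_nonpos (div_nonpos_of_nonpos_of_nonneg (by linarith) (Real.sqrt_nonneg _)),
      show -((x - y) / Real.sqrt a₁) = (y - x) / Real.sqrt a₁ by ring]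
    exact div_le_div_of_nonneg_left (by linarith) hm0 hm1
  · rcases le_or_gt x 0 with hx | hx
    · rw [hf x, hf y, if_pos hx, if_neg (not_le.2 hy),
        abs_of_nonpos (div_nonpos_of_nonpos_of_nonneg hx (Real.sqrt_nonneg _)),
        abs_of_nonneg (div_nonneg hy.le (Real.sqrt_nonneg _))]
      have h1 : y / Real.sqrt a₂ ≤ y / m := div_le_div_of_nonneg_left hy.le hm0 hm2
      have h2 : -x / Real.sqrt a₁ ≤ -x / m := div_le_div_of_nonneg_left (by linarith) hm0 hm1
      have h3 : (0:ℝ) ≤ y / Real.sqrt a₂ := div_nonneg hy.le (Real.sqrt_nonneg _)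
      have h4 : (0:ℝ) ≤ -x / Real.sqrt a₁ := div_nonneg (by linarith) (Real.sqrt_nonneg _)
      have h5 : (y - x) / m = y / m + -x / m := by ring
      have h6 : -(x / Real.sqrt a₁) = -x / Real.sqrt a₁ := (neg_div _ _).symm
      have h7 : (0:ℝ) ≤ y / m := div_nonneg hy.le hm0.le
      have h8 : (0:ℝ) ≤ -x / m := div_nonneg (by linarith) hm0.le
      rw [h6, abs_sub_le_iff]
      constructor
      · linarith
      · linarith
    · rw [hf x, hf y, if_neg (not_le.2 hx), if_neg (not_le.2 hy),
        abs_of_nonneg (div_nonneg hy.le (Real.sqrt_nonneg _)),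
        abs_of_nonneg (div_nonneg hx.le (Real.sqrt_nonneg _)),
        show y / Real.sqrt a₂ - x / Real.sqrt a₂ = (y - x) / Real.sqrt a₂ by ring,
        abs_of_nonneg (div_nonneg (by linarith) (Real.sqrt_nonneg _))]
      exact div_le_div_of_nonneg_left (by linarith) hm0 hm2

theorem Eplus_increment_upper_bound (a₁ a₂ : ℝ) (ha₁ : 0 < a₁) (ha₂ : 0 < a₂)
    (f : ℝ → ℝ)
    (hf : ∀ z : ℝ, f z = if z ≤ 0 then z / Real.sqrt a₁ else z / Real.sqrt a₂)
    (E : ℝ → ℝ → ℝ → ℝ)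
    (hE : ∀ u x z : ℝ, E u x z = Real.exp (-(|f z| + |f x|) ^ 2 / (2 * u))) :
    ∃ C : ℝ, 0 < C ∧ ∀ t : ℝ, 0 < t → ∀ x y : ℝ,
      (∫ u in Set.Ioc (0 : ℝ) t, (1 / (2 * Real.pi * u)) *
          ∫ z : ℝ, |E u y z - E u x z| ^ 2)
        ≤ C * |y - x| := by
  have hπ := Real.pi_pos
  set m : ℝ := Real.sqrt (min a₁ a₂) with hmdef
  have hm0 : 0 < m := Real.sqrt_pos.2 (lt_min ha₁ ha₂)
  set K0 : ℝ := (Real.sqrt a₁ + Real.sqrt a₂) / Real.sqrt Real.pi with hK0def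
  have hK0 : 0 < K0 :=
    div_pos (add_pos (Real.sqrt_pos.2 ha₁) (Real.sqrt_pos.2 ha₂)) (Real.sqrt_pos.2 hπ)
  have hgz : ∀ z : ℝ, |f z| = if z ≤ 0 then -z / Real.sqrt a₁ else z / Real.sqrt a₂ := by
    intro z
    rw [hf z]
    split_ifs with h
    · rw [abs_div, abs_of_nonpos h, abs_of_nonneg (Real.sqrt_nonneg _), neg_div]
    · rw [abs_div, abs_of_pos (not_le.1 h), abs_of_nonneg (Real.sqrt_nonneg _)]
  refine ⟨2 * K0 / m, div_pos (mul_pos two_pos hK0) hm0, ?_⟩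
  intro t ht x y
  have hlip : |(|f y| - |f x|)| ≤ m⁻¹ * |y - x| := by
    rcases le_total x y with hxy | hxy
    · exact EIUB_lip ha₁ ha₂ f hf x y hxy
    · have h := EIUB_lip ha₁ ha₂ f hf y x hxy
      rwa [abs_sub_comm (|f x|) (|f y|), abs_sub_comm x y] at h
  set c : ℝ := |f x| with hcdef
  set d : ℝ := |f y| with hddef
  have hc : 0 ≤ c := abs_nonneg _
  have hd : 0 ≤ d := abs_nonneg _
  set q : ℝ := |d - c| with hqdef
  have hq2 : (d - c) ^ 2 = q ^ 2 := (sq_abs _).symm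
  by_cases hq0 : q = 0
  · -- degenerate case: the integrand vanishes
    have hdc : d = c := by
      have := abs_eq_zero.1 hq0
      linarith
    have hzero : ∀ u z : ℝ, E u y z = E u x z := by
      intro u z
      rw [hE u y z, hE u x z, ← hcdef, ← hddef, hdc]
    have h0 : ∀ u : ℝ, (1 / (2 * Real.pi * u)) * ∫ z : ℝ, |E u y z - E u x z| ^ 2 = 0 := by
      intro u
      have hz2 : (fun z : ℝ => |E u y z - E u x z| ^ 2) = fun _ => (0:ℝ) := by
        funext z
        rw [hzero u z, sub_self, abs_zero]
        norm_num
      rw [hz2, integral_zero, mul_zero]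
    have hzint : (∫ u in Set.Ioc (0 : ℝ) t, (1 / (2 * Real.pi * u)) *
        ∫ z : ℝ, |E u y z - E u x z| ^ 2) = ∫ _ in Set.Ioc (0 : ℝ) t, (0:ℝ) :=
      setIntegral_congr_fun measurableSet_Ioc (fun u _ => h0 u)
    rw [hzint, integral_zero]
    exact mul_nonneg (le_of_lt (div_pos (mul_pos two_pos hK0) hm0)) (abs_nonneg _)
  · have hqpos : 0 < q := lt_of_le_of_ne (abs_nonneg _) (Ne.symm hq0)
    set b : ℝ := q ^ 2 / 4 with hbdef
    have hbpos : 0 < b := by positivity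
    have hsqrtb : Real.sqrt b = q / 2 := by
      rw [hbdef, show q ^ 2 / 4 = (q / 2) ^ 2 by ring, Real.sqrt_sq (by positivity)]
    set φ0 : ℝ → ℝ :=
      fun u => min ((Real.sqrt u)⁻¹) (q ^ 2 / 4 * ((Real.sqrt u)⁻¹ * u⁻¹)) with hφ0def
    have hφ0m : Measurable φ0 := by
      apply Measurable.min
      · exact Real.continuous_sqrt.measurable.inv
      · exact (Real.continuous_sqrt.measurable.inv.mul measurable_inv).const_mul _
    have hrw1 : ∀ u : ℝ, 0 < u → (Real.sqrt u)⁻¹ = u ^ (-(1/2) : ℝ) := by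
      intro u hu0
      rw [Real.sqrt_eq_rpow, ← Real.rpow_neg hu0.le]
    have hrw2 : ∀ u : ℝ, 0 < u → (Real.sqrt u)⁻¹ * u⁻¹ = u ^ (-(3/2) : ℝ) := by
      intro u hu0
      rw [Real.sqrt_eq_rpow, ← Real.rpow_neg hu0.le, ← Real.rpow_neg_one u,
        ← Real.rpow_add hu0]
      congr 1
      norm_num
    have hφ0nn : ∀ u : ℝ, 0 < u → 0 ≤ φ0 u := by
      intro u hu0
      apply le_min
      · positivity
      · positivity
    have hφ0le : ∀ u : ℝ, 0 < u → φ0 u ≤ u ^ (-(1/2) : ℝ) := by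
      intro u hu0
      rw [← hrw1 u hu0]
      exact min_le_left _ _
    -- integrability of the majorants
    have hIoc1 : IntegrableOn (fun u : ℝ => u ^ (-(1/2) : ℝ)) (Ioc 0 t) := by
      rw [← intervalIntegrable_iff_integrableOn_Ioc_of_le ht.le]
      exact _root_.intervalIntegral.intervalIntegrable_rpow' (by norm_num)
    have hφ0int : IntegrableOn φ0 (Ioc 0 t) := by
      refine Integrable.mono' hIoc1 hφ0m.aestronglyMeasurable ?_
      rw [ae_restrict_iff' measurableSet_Ioc]
      refine Filter.Eventually.of_forall fun u hu => ?_
      rw [Real.norm_eq_abs, abs_of_nonneg (hφ0nn u hu.1)]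
      exact hφ0le u hu.1
    -- the half-power integral over `Ioc 0 r` equals `2 √r`
    have hhalf : ∀ r : ℝ, 0 < r →
        ∫ u in Ioc (0:ℝ) r, u ^ (-(1/2) : ℝ) = 2 * Real.sqrt r := by
      intro r hr
      rw [← _root_.intervalIntegral.integral_of_le hr.le,
        integral_rpow (Or.inl (by norm_num)),
        show (-(1/2) + 1 : ℝ) = 1/2 by norm_num,
        Real.zero_rpow (by norm_num : (1/2 : ℝ) ≠ 0), Real.sqrt_eq_rpow]
      ring
    -- Step 1: pointwise domination
    have step1 : (∫ u in Set.Ioc (0 : ℝ) t, (1 / (2 * Real.pi * u)) *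
          ∫ z : ℝ, |E u y z - E u x z| ^ 2)
        ≤ ∫ u in Set.Ioc (0 : ℝ) t, K0 * φ0 u := by
      apply integral_mono_of_nonneg
      · refine (ae_restrict_iff' measurableSet_Ioc).2 (Filter.Eventually.of_forall fun u hu => ?_)
        have hu0 : 0 < u := hu.1
        have h1 : (0:ℝ) ≤ 1 / (2 * Real.pi * u) := by positivity
        exact mul_nonneg h1 (integral_nonneg fun z => by positivity)
      · exact hφ0int.const_mul K0
      · refine (ae_restrict_iff' measurableSet_Ioc).2
          (Filter.Eventually.of_forall fun u hu => ?_)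
        have hu0 : 0 < u := hu.1
        show (1 / (2 * Real.pi * u)) * (∫ z : ℝ, |E u y z - E u x z| ^ 2) ≤ K0 * φ0 u
        have hEz : (fun z : ℝ => |E u y z - E u x z| ^ 2) = fun z : ℝ =>
            (Real.exp (-(|f z| + d) ^ 2 / (2 * u))
              - Real.exp (-(|f z| + c) ^ 2 / (2 * u))) ^ 2 := by
          funext z
          rw [hE u y z, hE u x z, ← hcdef, ← hddef, sq_abs]
        rw [hEz]
        have hinner := EIUB_inner_bound ha₁ ha₂ hu0 hc hd (fun z => |f z|)
          (fun z => hgz z)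
        have h1 : (0:ℝ) ≤ 1 / (2 * Real.pi * u) := by positivity
        have halg := EIUB_alg ha₁ ha₂ hu0 hqpos.le (a₁ := a₁) (a₂ := a₂) (q := q)
        rw [hq2] at hinner
        calc (1 / (2 * Real.pi * u)) * ∫ z : ℝ,
              (Real.exp (-(|f z| + d) ^ 2 / (2 * u))
                - Real.exp (-(|f z| + c) ^ 2 / (2 * u))) ^ 2
            ≤ (1 / (2 * Real.pi * u)) * ((Real.sqrt a₁ + Real.sqrt a₂) *
              (2 * Real.sqrt (Real.pi * u) * (1 - Real.exp (-q ^ 2 / (4 * u))))) :=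
              mul_le_mul_of_nonneg_left hinner h1
          _ ≤ K0 * φ0 u := halg
    -- Step 2: bound the majorant integral by 2q
    have step2 : ∫ u in Set.Ioc (0 : ℝ) t, φ0 u ≤ 2 * q := by
      rcases le_or_gt t b with htb | hbt
      · have h1 : ∫ u in Ioc (0:ℝ) t, φ0 u ≤ ∫ u in Ioc (0:ℝ) t, u ^ (-(1/2) : ℝ) :=
          setIntegral_mono_on hφ0int hIoc1 measurableSet_Ioc fun u hu => hφ0le u hu.1
        have h2 := hhalf t ht
        have h3 : Real.sqrt t ≤ Real.sqrt b := Real.sqrt_le_sqrt htb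
        rw [hsqrtb] at h3
        calc ∫ u in Ioc (0:ℝ) t, φ0 u ≤ 2 * Real.sqrt t := by rw [← h2]; exact h1
          _ ≤ 2 * q := by linarith [Real.sqrt_nonneg t]
      · have hsplit : Ioc (0:ℝ) t = Ioc 0 b ∪ Ioc b t :=
          (Ioc_union_Ioc_eq_Ioc hbpos.le hbt.le).symm
        have hint1 : IntegrableOn φ0 (Ioc 0 b) :=
          hφ0int.mono_set (Ioc_subset_Ioc_right hbt.le)
        have hint2 : IntegrableOn φ0 (Ioc b t) :=
          hφ0int.mono_set (Ioc_subset_Ioc_left hbpos.le)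
        have hIocb : IntegrableOn (fun u : ℝ => u ^ (-(1/2) : ℝ)) (Ioc 0 b) := by
          rw [← intervalIntegrable_iff_integrableOn_Ioc_of_le hbpos.le]
          exact _root_.intervalIntegral.intervalIntegrable_rpow' (by norm_num)
        have hIocbt0 : IntegrableOn (fun u : ℝ => u ^ (-(3/2) : ℝ)) (Ioc b t) := by
          rw [← intervalIntegrable_iff_integrableOn_Ioc_of_le hbt.le]
          exact _root_.intervalIntegral.intervalIntegrable_rpow
            (Or.inr (notMem_uIcc_of_lt hbpos ht))
        have hIocbt : IntegrableOn (fun u : ℝ => q ^ 2 / 4 * u ^ (-(3/2) : ℝ)) (Ioc b t) :=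
          hIocbt0.const_mul _
        rw [hsplit, setIntegral_union (Ioc_disjoint_Ioc_of_le le_rfl) measurableSet_Ioc hint1 hint2]
        have p1 : ∫ u in Ioc (0:ℝ) b, φ0 u ≤ q := by
          have h1 : ∫ u in Ioc (0:ℝ) b, φ0 u ≤ ∫ u in Ioc (0:ℝ) b, u ^ (-(1/2) : ℝ) :=
            setIntegral_mono_on hint1 hIocb measurableSet_Ioc fun u hu => hφ0le u hu.1
          rw [hhalf b hbpos, hsqrtb] at h1
          linarith
        have p2 : ∫ u in Ioc b t, φ0 u ≤ q := by
          have h1 : ∫ u in Ioc b t, φ0 u ≤ ∫ u in Ioc b t, q ^ 2 / 4 * u ^ (-(3/2) : ℝ) := by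
            refine setIntegral_mono_on hint2 hIocbt measurableSet_Ioc fun u hu => ?_
            have hu0 : 0 < u := lt_trans hbpos hu.1
            calc φ0 u ≤ q ^ 2 / 4 * ((Real.sqrt u)⁻¹ * u⁻¹) := min_le_right _ _
              _ = q ^ 2 / 4 * u ^ (-(3/2) : ℝ) := by rw [hrw2 u hu0]
          have h2 : ∫ u in Ioc b t, q ^ 2 / 4 * u ^ (-(3/2) : ℝ)
              = q ^ 2 / 4 * ∫ u in Ioc b t, u ^ (-(3/2) : ℝ) := MeasureTheory.integral_const_mul _ _
          have h3 : ∫ u in Ioc b t, u ^ (-(3/2) : ℝ)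
              = (t ^ (-(1/2) : ℝ) - b ^ (-(1/2) : ℝ)) / (-(1/2)) := by
            rw [← _root_.intervalIntegral.integral_of_le hbt.le,
              integral_rpow
                (Or.inr ⟨by norm_num, notMem_uIcc_of_lt hbpos ht⟩),
              show (-(3/2) + 1 : ℝ) = -(1/2) by norm_num]
          have h4 : b ^ (-(1/2) : ℝ) = 2 / q := by
            rw [← hrw1 b hbpos, hsqrtb, inv_div]
          have h5 : (0:ℝ) ≤ t ^ (-(1/2) : ℝ) := Real.rpow_nonneg ht.le _
          have h6 : (t ^ (-(1/2) : ℝ) - b ^ (-(1/2) : ℝ)) / (-(1/2))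
              ≤ 2 * (2 / q) := by
            rw [h4]
            have : (t ^ (-(1/2) : ℝ) - 2 / q) / (-(1/2))
                = 2 * (2 / q) - 2 * t ^ (-(1/2) : ℝ) := by ring
            rw [this]
            linarith
          have hq' : q ≠ 0 := ne_of_gt hqpos
          calc ∫ u in Ioc b t, φ0 u
              ≤ q ^ 2 / 4 * ∫ u in Ioc b t, u ^ (-(3/2) : ℝ) := by rw [← h2]; exact h1
            _ ≤ q ^ 2 / 4 * (2 * (2 / q)) := by
                apply mul_le_mul_of_nonneg_left _ (by positivity)
                rw [h3]
                exact h6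
            _ = q := by field_simp; ring
        linarith
    -- assemble
    have hKint : ∫ u in Set.Ioc (0 : ℝ) t, K0 * φ0 u
        = K0 * ∫ u in Set.Ioc (0 : ℝ) t, φ0 u := MeasureTheory.integral_const_mul _ _
    calc (∫ u in Set.Ioc (0 : ℝ) t, (1 / (2 * Real.pi * u)) *
          ∫ z : ℝ, |E u y z - E u x z| ^ 2)
        ≤ ∫ u in Set.Ioc (0 : ℝ) t, K0 * φ0 u := step1
      _ = K0 * ∫ u in Set.Ioc (0 : ℝ) t, φ0 u := hKint
      _ ≤ K0 * (2 * q) := mul_le_mul_of_nonneg_left step2 hK0.le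
      _ ≤ K0 * (2 * (m⁻¹ * |y - x|)) := by
          apply mul_le_mul_of_nonneg_left _ hK0.le
          have : q ≤ m⁻¹ * |y - x| := hlip
          linarith
      _ = 2 * K0 / m * |y - x| := by
          rw [div_eq_mul_inv]
          ring
end

section
/- Let a₁, a₂ > 0 and f as above, and define E⁻(u,x,z) = exp(−(f(z)−f(x))²/(2u)) for u > 0. Fix A > 0 and t > 0. Then there exists c > 0 such that for all x, y ∈ [0, A], ∫₀ᵗ (2πu)^{-1} ∫_ℝ |E⁻(u,y,z) − E⁻(u,x,z)|² dz du ≥ c·|y − x|. -/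
open MeasureTheory Real Set

private lemma gauss_int' (b m : ℝ) (hb : 0 < b) :
    Integrable (fun z : ℝ => Real.exp (-b * (z - m)^2)) :=
  (integrable_exp_neg_mul_sq hb).comp_sub_right m

private lemma gauss_val' (b m : ℝ) :
    ∫ z : ℝ, Real.exp (-b * (z - m)^2) = Real.sqrt (π / b) := by
  rw [integral_sub_right_eq_self (fun z => Real.exp (-b * z^2)) m]
  exact integral_gaussian b

set_option maxHeartbeats 2000000 in
private lemma key_lb (a₁ a₂ : ℝ) (ha₁ : 0 < a₁) (ha₂ : 0 < a₂) (f : ℝ → ℝ)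
    (hf : ∀ z : ℝ, f z = if z ≤ 0 then z / Real.sqrt a₁ else z / Real.sqrt a₂)
    (A t : ℝ) (hA : 0 < A) (ht : 0 < t)
    (x y : ℝ) (hx : 0 ≤ x) (hy : y ≤ A) (hxy : x < y) :
    (Real.exp (-(max (1/16) (A^2/(a₂*(16*t))))) * (1 - Real.exp (-(1/4))))^2 / (16*π) * (y - x)
      ≤ ∫ u in Ioc (0:ℝ) t, (1/(2*π*u)) *
          ∫ z : ℝ, (rexp (-(f z - f y)^2/(2*u)) - rexp (-(f z - f x)^2/(2*u)))^2 := by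
  have hπ : 0 < π := Real.pi_pos
  have hs₁ : 0 < Real.sqrt a₁ := Real.sqrt_pos.2 ha₁
  have hs₂ : 0 < Real.sqrt a₂ := Real.sqrt_pos.2 ha₂
  set s₁ := Real.sqrt a₁ with hs₁def
  set s₂ := Real.sqrt a₂ with hs₂def
  have hs₁a : s₁^2 = a₁ := Real.sq_sqrt ha₁.le
  have hs₂a : s₂^2 = a₂ := Real.sq_sqrt ha₂.le
  have hfm : Measurable f := by
    have : f = fun z => if z ≤ 0 then z / s₁ else z / s₂ := funext hf
    rw [this]
    exact Measurable.ite (measurableSet_le measurable_id measurable_const)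
      (measurable_id.div_const _) (measurable_id.div_const _)
  have hfval : ∀ w : ℝ, 0 ≤ w → f w = w / s₂ := by
    intro w hw
    rw [hf w]
    split_ifs with h
    · have : w = 0 := le_antisymm h hw
      simp [this]
    · rfl
  set F : ℝ → ℝ → ℝ := fun u z =>
    (rexp (-(f z - f y)^2/(2*u)) - rexp (-(f z - f x)^2/(2*u)))^2 with hF
  set B : ℝ → ℝ → ℝ → ℝ := fun u c z =>
    rexp (-(1/(u*a₁)) * (z - f c * s₁)^2) + rexp (-(1/(u*a₂)) * (z - f c * s₂)^2) with hB
  -- pointwise Gaussian domination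
  have hBle : ∀ u c z : ℝ, 0 < u → rexp (-(f z - f c)^2 / u) ≤ B u c z := by
    intro u c z hu
    rcases le_or_gt z 0 with h | h
    · have hz : f z = z / s₁ := by rw [hf z, if_pos h]
      have he : -(f z - f c)^2 / u = -(1/(u*a₁)) * (z - f c * s₁)^2 := by
        rw [hz, ← hs₁a]
        field_simp
      rw [he]
      exact le_add_of_nonneg_right (Real.exp_nonneg _)
    · have hz : f z = z / s₂ := by rw [hf z, if_neg (not_le.2 h)]
      have he : -(f z - f c)^2 / u = -(1/(u*a₂)) * (z - f c * s₂)^2 := by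
        rw [hz, ← hs₂a]
        field_simp
      rw [he]
      exact le_add_of_nonneg_left (Real.exp_nonneg _)
  have hBint : ∀ u c : ℝ, 0 < u → Integrable (B u c) := by
    intro u c hu
    exact (gauss_int' _ _ (by positivity)).add (gauss_int' _ _ (by positivity))
  have hBval : ∀ u c : ℝ, 0 < u →
      ∫ z : ℝ, B u c z = Real.sqrt (π*(u*a₁)) + Real.sqrt (π*(u*a₂)) := by
    intro u c hu
    rw [hB]
    rw [integral_add (gauss_int' _ _ (by positivity)) (gauss_int' _ _ (by positivity))]
    rw [gauss_val', gauss_val', one_div, one_div, div_inv_eq_mul, div_inv_eq_mul]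
  have hFle : ∀ u z : ℝ, 0 < u → F u z ≤ 2 * B u y z + 2 * B u x z := by
    intro u z hu
    have e1 : ∀ c : ℝ, rexp (-(f z - f c)^2/(2*u))^2 = rexp (-(f z - f c)^2/u) := by
      intro c
      rw [sq, ← Real.exp_add]
      congr 1
      field_simp
      ring
    have h2 : F u z ≤ 2 * rexp (-(f z - f y)^2/(2*u))^2 + 2 * rexp (-(f z - f x)^2/(2*u))^2 := by
      simp only [hF]
      nlinarith [sq_nonneg (rexp (-(f z - f y)^2/(2*u)) + rexp (-(f z - f x)^2/(2*u)))]
    have h3 := hBle u y z hu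
    have h4 := hBle u x z hu
    rw [e1 y, e1 x] at h2
    refine h2.trans (add_le_add ?_ ?_)
    · exact mul_le_mul_of_nonneg_left h3 (by norm_num)
    · exact mul_le_mul_of_nonneg_left h4 (by norm_num)
  have hFmeas : ∀ u : ℝ, Measurable (F u) := by
    intro u
    apply Measurable.pow_const
    exact (Real.measurable_exp.comp
        ((((hfm.sub_const _).pow_const 2).neg).div_const _)).sub
      (Real.measurable_exp.comp ((((hfm.sub_const _).pow_const 2).neg).div_const _))
  have hFint : ∀ u : ℝ, 0 < u → Integrable (F u) := by
    intro u hu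
    refine Integrable.mono' (((hBint u y hu).const_mul 2).add ((hBint u x hu).const_mul 2))
      (hFmeas u).aestronglyMeasurable ?_
    filter_upwards with z
    rw [Real.norm_eq_abs, abs_of_nonneg (sq_nonneg _)]
    exact hFle u z hu
  have hFub : ∀ u : ℝ, 0 < u →
      (∫ z : ℝ, F u z) ≤ 4*(Real.sqrt (π*(u*a₁)) + Real.sqrt (π*(u*a₂))) := by
    intro u hu
    calc (∫ z : ℝ, F u z) ≤ ∫ z : ℝ, (2 * B u y z + 2 * B u x z) :=
          integral_mono (hFint u hu)
            (((hBint u y hu).const_mul 2).add ((hBint u x hu).const_mul 2))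
            (fun z => hFle u z hu)
      _ = 2*(∫ z : ℝ, B u y z) + 2*(∫ z : ℝ, B u x z) := by
          rw [integral_add ((hBint u y hu).const_mul 2) ((hBint u x hu).const_mul 2),
            integral_const_mul, integral_const_mul]
      _ = _ := by rw [hBval u y hu, hBval u x hu]; ring
  set h : ℝ → ℝ := fun u => (1/(2*π*u)) * ∫ z : ℝ, F u z with hh
  have hhnn : ∀ u : ℝ, 0 < u → 0 ≤ h u := by
    intro u hu
    exact mul_nonneg (by positivity) (integral_nonneg fun z => sq_nonneg _)
  -- measurability of h
  have hFm2 : Measurable fun p : ℝ × ℝ => F p.1 p.2 := by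
    apply Measurable.pow_const
    have hb : Measurable fun p : ℝ × ℝ => (2:ℝ) * p.1 := measurable_fst.const_mul 2
    exact (Real.measurable_exp.comp
        ((((hfm.comp measurable_snd).sub_const _).pow_const 2).neg.div hb)).sub
      (Real.measurable_exp.comp
        ((((hfm.comp measurable_snd).sub_const _).pow_const 2).neg.div hb))
  have hinm : StronglyMeasurable fun u : ℝ => ∫ z : ℝ, F u z :=
    hFm2.stronglyMeasurable.integral_prod_right'
  have hhm : Measurable h := by
    have h1m : Measurable fun u : ℝ => 1/(2*π*u) :=
      measurable_const.div (measurable_id.const_mul (2*π))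
    exact h1m.mul hinm.measurable
  -- integrability of h on Ioc 0 t
  set C : ℝ := 4*(Real.sqrt (π*a₁) + Real.sqrt (π*a₂)) with hC
  have hbound : ∀ u ∈ Ioc (0:ℝ) t, ‖h u‖ ≤ (C/(2*π)) * (Real.sqrt u)⁻¹ := by
    intro u hu
    have hu0 : 0 < u := hu.1
    have hsu : 0 < Real.sqrt u := Real.sqrt_pos.2 hu0
    rw [Real.norm_eq_abs, abs_of_nonneg (hhnn u hu0)]
    have h1 : h u ≤ (1/(2*π*u)) * (4*(Real.sqrt (π*(u*a₁)) + Real.sqrt (π*(u*a₂)))) :=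
      mul_le_mul_of_nonneg_left (hFub u hu0) (by positivity)
    have h2 : (1/(2*π*u)) * (4*(Real.sqrt (π*(u*a₁)) + Real.sqrt (π*(u*a₂))))
        = (C/(2*π)) * (Real.sqrt u)⁻¹ := by
      rw [show π*(u*a₁) = (π*a₁)*u by ring, show π*(u*a₂) = (π*a₂)*u by ring,
        Real.sqrt_mul (by positivity), Real.sqrt_mul (by positivity), hC]
      set su := Real.sqrt u with hsud
      have hsu2 : su^2 = u := Real.sq_sqrt hu0.le
      rw [← hsu2]
      have hsu0 : su ≠ 0 := ne_of_gt hsu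
      field_simp
      have e : √(π*su^2*a₂) = √π*su*√a₂ := by
        rw [Real.sqrt_mul' _ ha₂.le, Real.sqrt_mul hπ.le, Real.sqrt_sq hsu.le]
      rw [e, Real.sqrt_mul hπ.le a₁, Real.sqrt_mul hπ.le a₂]
      ring
    rw [← h2]
    exact h1
  have hrint : IntegrableOn (fun u : ℝ => (C/(2*π)) * (Real.sqrt u)⁻¹) (Ioc (0:ℝ) t) := by
    have h0 := ((intervalIntegral.intervalIntegrable_rpow' (a := 0) (b := t)
      (by norm_num : (-1:ℝ) < -(1/2))).1).const_mul (C/(2*π))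
    refine IntegrableOn.congr_fun h0 ?_ measurableSet_Ioc
    intro u hu
    show C/(2*π) * u^(-(1/2):ℝ) = C/(2*π) * (Real.sqrt u)⁻¹
    rw [Real.rpow_neg hu.1.le, ← Real.sqrt_eq_rpow]
  have hhint : IntegrableOn h (Ioc (0:ℝ) t) := by
    refine Integrable.mono' hrint hhm.aestronglyMeasurable ?_
    filter_upwards [ae_restrict_mem measurableSet_Ioc] with u hu
    exact hbound u hu
  -- lower bound part
  set K' : ℝ := y - x with hK'def
  have hK'pos : 0 < K' := sub_pos.2 hxy
  have hy0 : 0 < y := lt_of_le_of_lt hx hxy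
  set K : ℝ := K' / s₂ with hKdef
  have hKpos : 0 < K := div_pos hK'pos hs₂
  set M : ℝ := max (1/16) (A^2/(a₂*(16*t))) with hMdef
  set δ : ℝ := rexp (-M) * (1 - rexp (-(1/4))) with hδdef
  have hexp1 : rexp (-(1/4)) < 1 := by
    rw [Real.exp_lt_one_iff]; norm_num
  have hδ : 0 < δ := mul_pos (Real.exp_pos _) (by linarith)
  set T : ℝ := min t (K^2) with hTdef
  have hT0 : 0 < T := lt_min ht (by positivity)
  have hTt : T ≤ t := min_le_left _ _
  have hTK : T ≤ K^2 := min_le_right _ _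
  have hK'A : K' ≤ A := by rw [hK'def]; linarith
  have hK2A : K^2 ≤ A^2/a₂ := by
    rw [hKdef, div_pow, hs₂a]
    gcongr
  have hrM : K^2/(16*T) ≤ M := by
    rcases le_total t (K^2) with hc | hc
    · have hTeq : T = t := min_eq_left hc
      rw [hTeq]
      refine le_trans ?_ (le_max_right (1/16) (A^2/(a₂*(16*t))))
      rw [show A^2/(a₂*(16*t)) = (A^2/a₂)/(16*t) by rw [div_div]]
      gcongr
    · have hTeq : T = K^2 := min_eq_right hc
      rw [hTeq, show K^2/(16*K^2) = 1/16 by field_simp]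
      exact le_max_left _ _
  have hfy : f y = y / s₂ := hfval y hy0.le
  have hfx : f x = x / s₂ := hfval x hx
  -- pointwise lower bound
  have key1 : ∀ u ∈ Ioc (T/2) T, ∀ z ∈ Icc (y - K'/4) y,
      δ ≤ rexp (-(f z - f y)^2/(2*u)) - rexp (-(f z - f x)^2/(2*u)) := by
    intro u hu z hz
    have hu0 : 0 < u := lt_trans (by positivity) hu.1
    have hz1 := hz.1
    have hz2 := hz.2
    have hz0 : 0 < z := by
      have : 0 < y - K'/4 := by rw [hK'def]; linarith
      linarith
    have hfz : f z = z / s₂ := hfval z hz0.le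
    have hb1 : (f z - f y)^2 ≤ K^2/16 := by
      have e : (f z - f y)^2 = (z-y)^2/a₂ := by
        rw [hfz, hfy, div_sub_div_same, div_pow, hs₂a]
      have e2 : K^2/16 = (K'/4)^2/a₂ := by
        rw [hKdef, div_pow, hs₂a]; ring
      have hsq : (z-y)^2 ≤ (K'/4)^2 := sq_le_sq' (by linarith) (by linarith)
      rw [e, e2]
      exact div_le_div_of_nonneg_right hsq ha₂.le
    have hb2 : 9*K^2/16 ≤ (f z - f x)^2 := by
      have e : (f z - f x)^2 = (z-x)^2/a₂ := by
        rw [hfz, hfx, div_sub_div_same, div_pow, hs₂a]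
      have e2 : 9*K^2/16 = (3*K'/4)^2/a₂ := by
        rw [hKdef, div_pow, hs₂a]; ring
      have hzx : 3*K'/4 ≤ z - x := by rw [hK'def]; rw [hK'def] at hz1; linarith
      have hsq : (3*K'/4)^2 ≤ (z-x)^2 := by
        apply pow_le_pow_left₀ (by positivity) hzx
      rw [e, e2]
      exact div_le_div_of_nonneg_right hsq ha₂.le
    have hEy : rexp (-(K^2/16)/(2*u)) ≤ rexp (-(f z - f y)^2/(2*u)) := by
      apply Real.exp_le_exp.2
      apply div_le_div_of_nonneg_right (by linarith) (by positivity)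
    have hEx : rexp (-(f z - f x)^2/(2*u)) ≤ rexp (-(9*K^2/16)/(2*u)) := by
      apply Real.exp_le_exp.2
      apply div_le_div_of_nonneg_right (by linarith) (by positivity)
    set r : ℝ := K^2/(32*u) with hrdef
    have er1 : -(K^2/16)/(2*u) = -r := by rw [hrdef]; ring
    have er2 : -(9*K^2/16)/(2*u) = -(9*r) := by rw [hrdef]; ring
    have hr1 : 1/32 ≤ r := by
      rw [hrdef]
      calc (1:ℝ)/32 = K^2/(32*K^2) := by field_simp
        _ ≤ K^2/(32*u) := by
            gcongr
            linarith [hu.2, hTK]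
    have hr2 : r ≤ M := by
      have h16 : 16*T ≤ 32*u := by linarith [hu.1]
      calc r = K^2/(32*u) := hrdef
        _ ≤ K^2/(16*T) := by gcongr
        _ ≤ M := hrM
    have ha' : rexp (-M) ≤ rexp (-r) := Real.exp_le_exp.2 (by linarith)
    have hb' : rexp (-(8*r)) ≤ rexp (-(1/4)) := Real.exp_le_exp.2 (by linarith)
    have hb'' : rexp (-(8*r)) ≤ 1 := Real.exp_le_one_iff.2 (by linarith)
    have hfact : rexp (-r) - rexp (-(9*r)) = rexp (-r) * (1 - rexp (-(8*r))) := by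
      rw [mul_sub, mul_one, ← Real.exp_add, show -r + -(8*r) = -(9*r) by ring]
    have hstep : δ ≤ rexp (-r) - rexp (-(9*r)) := by
      rw [hfact, hδdef]
      apply mul_le_mul ha' (by linarith) (by linarith) (Real.exp_nonneg _)
    have hEy' : rexp (-r) ≤ rexp (-(f z - f y)^2/(2*u)) := by rw [← er1]; exact hEy
    have hEx' : rexp (-(f z - f x)^2/(2*u)) ≤ rexp (-(9*r)) := by rw [← er2]; exact hEx
    linarith [hstep]
  -- integrate the pointwise bound
  have key2 : ∀ u ∈ Ioc (T/2) T, (1/(2*π*T)) * (δ^2 * (K'/4)) ≤ h u := by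
    intro u hu
    have hu0 : 0 < u := lt_trans (by positivity) hu.1
    have hinner : δ^2 * (K'/4) ≤ ∫ z : ℝ, F u z := by
      have hconst : ∀ z ∈ Icc (y - K'/4) y, δ^2 ≤ F u z := by
        intro z hz
        exact pow_le_pow_left₀ hδ.le (key1 u hu z hz) 2
      have hsub := setIntegral_ge_of_const_le_real measurableSet_Icc
        (by rw [Real.volume_Icc]; exact ENNReal.ofReal_ne_top)
        hconst ((hFint u hu0).integrableOn)
      rw [Real.volume_real_Icc_of_le (by linarith)] at hsub
      have hmeq : y - (y - K'/4) = K'/4 := by ring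
      rw [hmeq] at hsub
      exact hsub.trans (setIntegral_le_integral (hFint u hu0)
        (Filter.Eventually.of_forall fun z => sq_nonneg _))
    have hfrac : (1/(2*π*T)) ≤ (1/(2*π*u)) := by
      apply one_div_le_one_div_of_le (by positivity)
      have := hu.2
      nlinarith [hπ]
    calc (1/(2*π*T)) * (δ^2 * (K'/4)) ≤ (1/(2*π*u)) * (δ^2 * (K'/4)) :=
          mul_le_mul_of_nonneg_right hfrac (by positivity)
      _ ≤ (1/(2*π*u)) * ∫ z : ℝ, F u z := mul_le_mul_of_nonneg_left hinner (by positivity)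
      _ = h u := rfl
  have hsubset : Ioc (T/2) T ⊆ Ioc (0:ℝ) t :=
    Ioc_subset_Ioc (by positivity) hTt
  have step0 : (1/(2*π*T)) * (δ^2 * (K'/4)) * ((volume (Ioc (T/2) T)).toReal)
      ≤ ∫ u in Ioc (T/2) T, h u :=
    setIntegral_ge_of_const_le_real measurableSet_Ioc
      (by rw [Real.volume_Ioc]; exact ENNReal.ofReal_ne_top) key2 (hhint.mono_set hsubset)
  rw [Real.volume_Ioc, ENNReal.toReal_ofReal (by linarith)] at step0
  have step1 : ∫ u in Ioc (T/2) T, h u ≤ ∫ u in Ioc (0:ℝ) t, h u := by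
    apply setIntegral_mono_set hhint ?_ (HasSubset.Subset.eventuallyLE hsubset)
    filter_upwards [ae_restrict_mem measurableSet_Ioc] with u hu
    exact hhnn u hu.1
  have hgoal : (∫ u in Ioc (0:ℝ) t, h u) = ∫ u in Ioc (0:ℝ) t, (1/(2*π*u)) *
      ∫ z : ℝ, (rexp (-(f z - f y)^2/(2*u)) - rexp (-(f z - f x)^2/(2*u)))^2 := by
    simp only [hh, hF]
  calc δ^2/(16*π) * K' = (1/(2*π*T)) * (δ^2 * (K'/4)) * (T - T/2) := by
        field_simp
        ring
    _ ≤ ∫ u in Ioc (T/2) T, h u := step0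
    _ ≤ ∫ u in Ioc (0:ℝ) t, h u := step1
    _ = _ := hgoal


theorem Eminus_increment_lower_bound (a₁ a₂ : ℝ) (ha₁ : 0 < a₁) (ha₂ : 0 < a₂)
    (f : ℝ → ℝ)
    (hf : ∀ z : ℝ, f z = if z ≤ 0 then z / Real.sqrt a₁ else z / Real.sqrt a₂)
    (E : ℝ → ℝ → ℝ → ℝ)
    (hE : ∀ u x z : ℝ, E u x z = Real.exp (-(f z - f x) ^ 2 / (2 * u)))
    (A t : ℝ) (hA : 0 < A) (ht : 0 < t) :
    ∃ c : ℝ, 0 < c ∧ ∀ x ∈ Set.Icc (0 : ℝ) A, ∀ y ∈ Set.Icc (0 : ℝ) A,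
      c * |y - x| ≤ ∫ u in Set.Ioc (0 : ℝ) t, (1 / (2 * Real.pi * u)) *
          ∫ z : ℝ, |E u y z - E u x z| ^ 2 := by
  have hc : 0 < (Real.exp (-(max (1/16) (A^2/(a₂*(16*t))))) * (1 - Real.exp (-(1/4))))^2
      / (16*π) := by
    have h1 : Real.exp (-(1/4)) < 1 := by rw [Real.exp_lt_one_iff]; norm_num
    have h2 : 0 < Real.exp (-(max (1/16) (A^2/(a₂*(16*t))))) * (1 - Real.exp (-(1/4))) :=
      mul_pos (Real.exp_pos _) (by linarith)
    exact div_pos (pow_pos h2 2) (by positivity)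
  refine ⟨_, hc, ?_⟩
  intro x hx y hy
  have hrw : ∀ x' y' : ℝ,
      (∫ u in Set.Ioc (0:ℝ) t, (1 / (2 * Real.pi * u)) * ∫ z : ℝ, |E u y' z - E u x' z| ^ 2)
      = ∫ u in Set.Ioc (0:ℝ) t, (1/(2*π*u)) *
          ∫ z : ℝ, (rexp (-(f z - f y')^2/(2*u)) - rexp (-(f z - f x')^2/(2*u)))^2 := by
    intro x' y'
    congr 1
    funext u
    congr 1
    congr 1
    funext z
    rw [hE, hE, sq_abs]
  rw [hrw x y]
  rcases lt_trichotomy x y with h | h | h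
  · rw [abs_of_pos (sub_pos.2 h)]
    exact key_lb a₁ a₂ ha₁ ha₂ f hf A t hA ht x y hx.1 hy.2 h
  · subst h
    simp only [sub_self, abs_zero, mul_zero]
    apply setIntegral_nonneg measurableSet_Ioc
    intro u hu
    have hu0 : 0 < u := hu.1
    exact mul_nonneg (by positivity) (integral_nonneg fun z => sq_nonneg _)
  · rw [abs_of_neg (sub_neg.2 h), neg_sub]
    have hk := key_lb a₁ a₂ ha₁ ha₂ f hf A t hA ht y x hy.1 hx.2 h
    have heq : (∫ u in Set.Ioc (0:ℝ) t, (1/(2*π*u)) *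
          ∫ z : ℝ, (rexp (-(f z - f x)^2/(2*u)) - rexp (-(f z - f y)^2/(2*u)))^2)
        = ∫ u in Set.Ioc (0:ℝ) t, (1/(2*π*u)) *
          ∫ z : ℝ, (rexp (-(f z - f y)^2/(2*u)) - rexp (-(f z - f x)^2/(2*u)))^2 := by
      congr 1
      funext u
      congr 1
      congr 1
      funext z
      ring
    rw [← heq]
    exact hk
end
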